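/- arXiv:1706.02060 — 7 statements merged into one kernel-verified Lean document; each statement's English description precedes it below -/
import Mathlib

section
/- For a nonnegative integer N and an integer q with (N+1)/2 ≤ q ≤ N+1, the (N+1)×(N+1) pseudo-Vandermonde matrix whose first q columns are (1, u_j, u_j^2, ..., u_j^N) for j = 1,...,q and whose last N+1−q columns are the derivatives (0, 1, 2u_j, ..., N u_j^{N−1}) for j = 1,...,N+1−q is nonsingular, provided the real numbers u_1, ..., u_q are pairwise distinct. -/
open Polynomial

lemma sq_dvd_of_root_root_deriv {a : ℝ} {p : ℝ[X]} (h1 : p.IsRoot a)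
    (h2 : p.derivative.IsRoot a) : (X - C a) ^ 2 ∣ p := by
  obtain ⟨g, hg⟩ := (dvd_iff_isRoot).mpr h1
  have hd : p.derivative = g + (X - C a) * g.derivative := by
    rw [hg, derivative_mul]; simp
  have hga : g.IsRoot a := by
    have := h2
    rw [hd] at this
    simpa [IsRoot] using this
  obtain ⟨h, hh⟩ := (dvd_iff_isRoot).mpr hga
  exact ⟨h, by rw [hg, hh]; ring⟩

/-- The pseudo-Vandermonde matrix whose first `q` columns are `(1, u_j, …, u_j^N)`
and whose last `N+1-q` columns are the derivative columns `(0, 1, 2u_j, …, N u_j^{N-1})`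
is nonsingular when the `u_j` (for `j < q`) are pairwise distinct. -/
theorem pseudo_vandermonde_nonsingular (N q : ℕ) (hq1 : N + 1 ≤ 2 * q) (hq2 : q ≤ N + 1)
    (u : ℕ → ℝ) (hu : ∀ a < q, ∀ b < q, u a = u b → a = b) :
    (Matrix.of fun i j : Fin (N + 1) =>
      if (j : ℕ) < q then u (j : ℕ) ^ (i : ℕ)
      else ((i : ℕ) : ℝ) * u ((j : ℕ) - q) ^ ((i : ℕ) - 1)).det ≠ 0 := by
  intro hdet
  set A : Matrix (Fin (N+1)) (Fin (N+1)) ℝ := Matrix.of fun i j : Fin (N + 1) =>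
      if (j : ℕ) < q then u (j : ℕ) ^ (i : ℕ)
      else ((i : ℕ) : ℝ) * u ((j : ℕ) - q) ^ ((i : ℕ) - 1) with hA
  have hdetT : A.transpose.det = 0 := by rw [Matrix.det_transpose]; exact hdet
  obtain ⟨v, hv0, hv⟩ := Matrix.exists_mulVec_eq_zero_iff.mpr hdetT
  set p : ℝ[X] := ∑ i : Fin (N+1), C (v i) * X ^ (i : ℕ) with hp
  -- each column gives an equation
  have hcol : ∀ j : Fin (N+1), ∑ i : Fin (N+1), A i j * v i = 0 := by
    intro j
    have := congrFun hv j
    simpa [Matrix.mulVec, dotProduct, Matrix.transpose_apply, mul_comm] using this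
  have hpne : p ≠ 0 := by
    obtain ⟨i, hi⟩ := Function.ne_iff.mp hv0
    intro h
    apply hi
    have := congrArg (fun r => Polynomial.coeff r (i : ℕ)) h
    simpa [hp, coeff_X_pow, Fin.val_eq_val, Finset.sum_ite_eq'] using this
  have hdeg : p.natDegree ≤ N := by
    apply Polynomial.natDegree_sum_le_of_forall_le
    intro i _
    exact (Polynomial.natDegree_C_mul_X_pow_le _ _).trans (Nat.lt_succ_iff.mp i.isLt)
  have hroot : ∀ j < q, p.IsRoot (u j) := by
    intro j hj
    have hjN : j < N + 1 := lt_of_lt_of_le hj hq2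
    have := hcol ⟨j, hjN⟩
    simp only [hA, Matrix.of_apply, hj, if_pos] at this
    simp only [IsRoot, hp, eval_finset_sum, eval_mul, eval_C, eval_pow, eval_X]
    rw [← this]
    exact Finset.sum_congr rfl fun i _ => by ring
  have hder : ∀ j < N + 1 - q, p.derivative.IsRoot (u j) := by
    intro j hj
    have hjN : q + j < N + 1 := by omega
    have := hcol ⟨q + j, hjN⟩
    have hnot : ¬ (q + j < q) := by omega
    simp only [hA, Matrix.of_apply, hnot, if_neg, not_false_iff] at this
    have heq : (q + j) - q = j := by omega
    rw [heq] at this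
    have hderiv : p.derivative = ∑ i : Fin (N+1), C (v i * (i : ℕ)) * X ^ ((i : ℕ) - 1) := by
      rw [hp, derivative_sum]
      exact Finset.sum_congr rfl fun i _ => derivative_C_mul_X_pow _ _
    simp only [IsRoot, hderiv, eval_finset_sum, eval_mul, eval_C, eval_pow, eval_X]
    rw [← this]
    exact Finset.sum_congr rfl fun i _ => by ring
  -- build the divisor polynomial
  set e : ℕ → ℕ := fun j => if j < N + 1 - q then 2 else 1 with he
  set g : ℝ[X] := ∏ j ∈ Finset.range q, (X - C (u j)) ^ (e j) with hg
  have hinj : Set.InjOn u (Finset.range q) := by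
    intro a ha b hb hab
    exact hu a (Finset.mem_range.mp ha) b (Finset.mem_range.mp hb) hab
  have hdvd : g ∣ p := by
    apply Finset.prod_dvd_of_coprime
    · intro a ha b hb hab
      refine IsCoprime.pow ?_
      apply Polynomial.isCoprime_X_sub_C_of_isUnit_sub
      rw [isUnit_iff_ne_zero, sub_ne_zero]
      exact fun h => hab (hinj ha hb h)
    · intro j hj
      have hjq := Finset.mem_range.mp hj
      by_cases hcase : j < N + 1 - q
      · rw [he]; simp only [hcase, if_pos]
        exact sq_dvd_of_root_root_deriv (hroot j hjq) (hder j hcase)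
      · rw [he]; simp only [hcase, if_neg, not_false_iff, pow_one]
        exact dvd_iff_isRoot.mpr (hroot j hjq)
  have hgdeg : g.natDegree = N + 1 := by
    rw [hg, Polynomial.natDegree_prod_of_monic _ _ (fun j _ => (monic_X_sub_C _).pow _)]
    simp only [Polynomial.natDegree_pow, Polynomial.natDegree_X_sub_C, mul_one]
    rw [Finset.range_eq_Ico, ← Finset.sum_Ico_consecutive _ (Nat.zero_le (N+1-q)) (by omega : N+1-q ≤ q)]
    have h1 : ∑ j ∈ Finset.Ico 0 (N+1-q), e j = ∑ j ∈ Finset.Ico 0 (N+1-q), 2 :=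
      Finset.sum_congr rfl fun j hj => by
        simp only [he]; rw [if_pos (Finset.mem_Ico.mp hj).2]
    have h2 : ∑ j ∈ Finset.Ico (N+1-q) q, e j = ∑ j ∈ Finset.Ico (N+1-q) q, 1 :=
      Finset.sum_congr rfl fun j hj => by
        simp only [he]; rw [if_neg (Nat.not_lt.mpr (Finset.mem_Ico.mp hj).1)]
    rw [h1, h2]
    simp only [Finset.sum_const, Nat.card_Ico, smul_eq_mul, mul_one, Nat.sub_zero]
    omega
  have := Polynomial.natDegree_le_of_dvd hdvd hpne
  omega
end

section
/- Let N be odd, let t_min < t_max be reals, and let C_N(t) = (t, t^2, ..., t^N). Every point in the convex hull of the image of C_N over [t_min, t_max] can be written as a convex combination of at most (N+1)/2 points of the form C_N(t_j) with t_j ∈ [t_min, t_max]. -/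
open Polynomial Finset

/-- Pad a finitely supported quadrature on a finset into `Fin n` functions. -/
lemma MCaux.finset_to_fin (d : ℝ) : ∀ (n : ℕ) (S : Finset ℝ) (w : ℝ → ℝ), S.card ≤ n →
    ∃ c t : Fin n → ℝ, (∀ j, (c j = w (t j) ∧ t j ∈ S) ∨ (c j = 0 ∧ t j = d)) ∧
      (∀ g : ℝ → ℝ, ∑ j, c j * g (t j) = ∑ x ∈ S, w x * g x) := by
  intro n
  induction n with
  | zero =>
    intro S w hS
    refine ⟨![], ![], fun j => j.elim0, fun g => ?_⟩
    rw [Finset.card_eq_zero.mp (Nat.le_zero.mp hS)]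
    simp
  | succ n ih =>
    intro S w hS
    rcases S.eq_empty_or_nonempty with rfl | ⟨x, hx⟩
    · refine ⟨0, fun _ => d, fun j => Or.inr ⟨rfl, rfl⟩, fun g => ?_⟩
      simp
    · obtain ⟨c', t', hmem, hsum⟩ := ih (S.erase x) w (by
        have := Finset.card_erase_of_mem hx
        omega)
      refine ⟨Fin.cons (w x) c', Fin.cons x t', ?_, fun g => ?_⟩
      · intro j
        refine Fin.cases ?_ ?_ j
        · exact Or.inl ⟨by simp, by simp [hx]⟩
        · intro i
          rcases hmem i with ⟨h1, h2⟩ | ⟨h1, h2⟩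
          · exact Or.inl ⟨by simpa using h1, by simpa using (Finset.erase_subset _ _ h2)⟩
          · exact Or.inr ⟨by simpa using h1, by simpa using h2⟩
      · rw [Fin.sum_univ_succ]
        simp only [Fin.cons_zero, Fin.cons_succ]
        rw [hsum g]
        exact Finset.add_sum_erase _ (fun x => w x * g x) hx

lemma MCaux.monic_pos (q : ℝ[X]) (hm : q.Monic) (hr : ∀ y, q.eval y ≠ 0) (x : ℝ) :
    0 < q.eval x := by
  rcases Nat.eq_zero_or_pos q.natDegree with h0 | hpos
  · have : q = 1 := hm.natDegree_eq_zero.mp h0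
    simp [this]
  · have hdeg : 0 < q.degree := natDegree_pos_iff_degree_pos.mp hpos
    have htt : Filter.Tendsto (fun y => q.eval y) Filter.atTop Filter.atTop :=
      q.tendsto_atTop_of_leadingCoeff_nonneg hdeg (by rw [hm.leadingCoeff]; norm_num)
    by_contra hle
    push_neg at hle
    have hx : q.eval x < 0 := lt_of_le_of_ne hle (hr x)
    obtain ⟨y, h1, hxy⟩ := ((htt.eventually_ge_atTop 1).and (Filter.eventually_ge_atTop x)).exists
    have : (0:ℝ) ∈ Set.Icc (q.eval x) (q.eval y) := ⟨hx.le, by linarith⟩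
    obtain ⟨z, _, hz⟩ := intermediate_value_Icc hxy (q.continuous.continuousOn) this
    exact hr z hz

lemma MCaux.sign (p : ℝ[X]) (hm : p.Monic) (x : ℝ) :
    0 ≤ p.eval x * ∏ r ∈ p.roots.toFinset.filter (fun r => Odd (p.roots.count r)), (x - r) := by
  have hne : p ≠ 0 := hm.ne_zero
  set pr : ℝ[X] := (p.roots.map fun a => X - C a).prod with hpr
  have hprm : pr.Monic := monic_multisetProd_X_sub_C _
  have hdvd : pr ∣ p := prod_multiset_X_sub_C_dvd p
  have hfac : p = pr * (p /ₘ pr) := by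
    conv_lhs => rw [← modByMonic_add_div p pr]
    rw [(modByMonic_eq_zero_iff_dvd hprm).mpr hdvd, zero_add]
  set q : ℝ[X] := p /ₘ pr with hq
  have hqm : q.Monic := hprm.of_mul_monic_left (hfac ▸ hm)
  have hqroots : q.roots = 0 := by
    have h1 : p.roots = pr.roots + q.roots := by
      conv_lhs => rw [hfac]
      exact roots_mul (hfac ▸ hne)
    have h2 : pr.roots = p.roots := roots_multiset_prod_X_sub_C _
    rw [h2] at h1
    exact (left_eq_add.mp h1)
  have hqnr : ∀ y, q.eval y ≠ 0 := by
    intro y hy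
    have : y ∈ q.roots := (mem_roots hqm.ne_zero).mpr hy
    rw [hqroots] at this
    exact Multiset.notMem_zero _ this
  have hqpos := MCaux.monic_pos q hqm hqnr x
  have hevalpr : pr.eval x = ∏ r ∈ p.roots.toFinset, (x - r) ^ (p.roots.count r) := by
    rw [hpr, eval_multiset_prod, Multiset.map_map]
    rw [show (Multiset.map ((fun q => eval x q) ∘ fun a => X - C a) p.roots)
        = Multiset.map (fun a => x - a) p.roots by
      simp [Function.comp]]
    exact Finset.prod_multiset_map_count _ _
  have hevalp : p.eval x = q.eval x * ∏ r ∈ p.roots.toFinset, (x - r) ^ (p.roots.count r) := by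
    conv_lhs => rw [hfac]
    rw [eval_mul, hevalpr, mul_comm]
  rw [hevalp, Finset.prod_filter, mul_assoc, ← Finset.prod_mul_distrib]
  refine mul_nonneg hqpos.le (Finset.prod_nonneg fun r _ => ?_)
  by_cases hodd : Odd (p.roots.count r)
  · rw [if_pos hodd, ← pow_succ]
    exact (Odd.add_one hodd).pow_nonneg _
  · rw [if_neg hodd, mul_one]
    exact (Nat.not_odd_iff_even.mp hodd).pow_nonneg _

lemma MCaux.exists_orth (n : ℕ) (hn : 0 < n) (S : Finset ℝ) (c : ℝ → ℝ)
    (hpos : ∀ t ∈ S, 0 < c t) (hcard : n < S.card) :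
    ∃ p : ℝ[X], p.Monic ∧ p.natDegree = n ∧
      ∀ q : ℝ[X], q.natDegree < n → ∑ t ∈ S, c t * (p.eval t * q.eval t) = 0 := by
  classical
  set G : Matrix (Fin n) (Fin n) ℝ :=
    fun i j => ∑ t ∈ S, c t * (t ^ (i : ℕ) * t ^ (j : ℕ)) with hG
  set Q : (Fin n → ℝ) → ℝ[X] := fun a => ∑ j : Fin n, C (a j) * X ^ (j : ℕ) with hQdef
  have evalQ : ∀ (a : Fin n → ℝ) (t : ℝ), (Q a).eval t = ∑ j : Fin n, a j * t ^ (j : ℕ) := by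
    intro a t; simp [hQdef, eval_finset_sum]
  have ndQ : ∀ a, (Q a).natDegree ≤ n - 1 := by
    intro a
    refine natDegree_sum_le_of_forall_le _ _ fun j _ => ?_
    refine (natDegree_C_mul_le _ _).trans ?_
    rw [natDegree_X_pow]
    omega
  have degQ : ∀ a, (Q a).degree < n := by
    intro a
    rcases eq_or_ne (Q a) 0 with h | h
    · rw [h, degree_zero]; exact WithBot.bot_lt_coe _
    · rw [← natDegree_lt_iff_degree_lt h]; have := ndQ a; omega
  have coeffQ : ∀ (a : Fin n → ℝ) (j : Fin n), (Q a).coeff (j : ℕ) = a j := by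
    intro a j
    rw [hQdef]
    rw [finset_sum_coeff]
    rw [Finset.sum_eq_single j (fun i _ hij => ?_) (by simp)]
    · simp
    · rw [coeff_C_mul, coeff_X_pow, if_neg (fun hc => hij (Fin.ext hc.symm)), mul_zero]
  have h1 : ∀ (b : Fin n → ℝ) (i : Fin n),
      G.mulVec b i = ∑ t ∈ S, c t * t ^ (i : ℕ) * (Q b).eval t := by
    intro b i
    simp only [Matrix.mulVec, dotProduct, hG]
    rw [show (∑ j : Fin n, (∑ t ∈ S, c t * (t ^ (i:ℕ) * t ^ (j:ℕ))) * b j)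
        = ∑ j : Fin n, ∑ t ∈ S, c t * (t ^ (i:ℕ) * t ^ (j:ℕ)) * b j from
      Finset.sum_congr rfl fun j _ => Finset.sum_mul _ _ _]
    rw [Finset.sum_comm]
    refine Finset.sum_congr rfl fun t _ => ?_
    rw [evalQ, Finset.mul_sum]
    exact Finset.sum_congr rfl fun j _ => by ring
  have h2 : ∀ a b : Fin n → ℝ, ∑ i, a i * G.mulVec b i
      = ∑ t ∈ S, c t * ((Q a).eval t * (Q b).eval t) := by
    intro a b
    simp only [h1, Finset.mul_sum]
    rw [Finset.sum_comm]
    refine Finset.sum_congr rfl fun t _ => ?_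
    calc ∑ i : Fin n, a i * (c t * t ^ (i:ℕ) * (Q b).eval t)
        = (∑ i : Fin n, a i * t ^ (i:ℕ)) * (c t * (Q b).eval t) := by
          rw [Finset.sum_mul]; exact Finset.sum_congr rfl fun i _ => by ring
      _ = c t * ((Q a).eval t * (Q b).eval t) := by simp only [evalQ]; ring
  have hinj : Function.Injective G.mulVecLin := by
    rw [injective_iff_map_eq_zero]
    intro a ha
    have hz : ∑ t ∈ S, c t * ((Q a).eval t * (Q a).eval t) = 0 := by
      rw [← h2]
      simp only [Matrix.mulVecLin_apply] at ha
      rw [ha]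
      simp
    have hterm : ∀ t ∈ S, c t * ((Q a).eval t * (Q a).eval t) = 0 :=
      (Finset.sum_eq_zero_iff_of_nonneg
        (fun t ht => mul_nonneg (hpos t ht).le (mul_self_nonneg _))).mp hz
    have heval : ∀ t ∈ S, (Q a).eval t = 0 := by
      intro t ht
      have := hterm t ht
      have hc := (hpos t ht).ne'
      rcases mul_eq_zero.mp this with h | h
      · exact absurd h hc
      · exact (mul_self_eq_zero).mp h
    have hQ0 : Q a = 0 :=
      eq_zero_of_natDegree_lt_card_of_eval_eq_zero' _ S heval (by have := ndQ a; omega)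
    funext j
    rw [← coeffQ a j, hQ0]
    simp
  obtain ⟨a, ha⟩ := LinearMap.surjective_of_injective hinj
    (fun i => - ∑ t ∈ S, c t * t ^ (i : ℕ) * t ^ n)
  set p : ℝ[X] := X ^ n + Q a with hp
  have hmon : p.Monic := monic_X_pow_add (degQ a)
  have hnd : p.natDegree = n := by
    rw [hp, natDegree_add_eq_left_of_natDegree_lt (by rw [natDegree_X_pow]; have := ndQ a; omega),
      natDegree_X_pow]
  refine ⟨p, hmon, hnd, ?_⟩
  have horthX : ∀ i : Fin n, ∑ t ∈ S, c t * (p.eval t * t ^ (i : ℕ)) = 0 := by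
    intro i
    have hsplit : ∑ t ∈ S, c t * (p.eval t * t ^ (i : ℕ))
        = (∑ t ∈ S, c t * t ^ (i:ℕ) * t ^ n) + ∑ t ∈ S, c t * t ^ (i:ℕ) * (Q a).eval t := by
      rw [← Finset.sum_add_distrib]
      refine Finset.sum_congr rfl fun t _ => ?_
      rw [hp, eval_add, eval_pow, eval_X]
      ring
    rw [hsplit, ← h1]
    have : G.mulVec a i = - ∑ t ∈ S, c t * t ^ (i : ℕ) * t ^ n := by
      have := congrFun ha i
      simpa [Matrix.mulVecLin_apply] using this
    rw [this]; ring
  intro q hq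
  have hevalq : ∀ t : ℝ, q.eval t = ∑ i ∈ Finset.range n, q.coeff i * t ^ i :=
    fun t => eval_eq_sum_range' hq t
  calc ∑ t ∈ S, c t * (p.eval t * q.eval t)
      = ∑ i ∈ Finset.range n, ∑ t ∈ S, q.coeff i * (c t * (p.eval t * t ^ i)) := by
        rw [Finset.sum_comm]
        refine Finset.sum_congr rfl fun t _ => ?_
        rw [hevalq t, Finset.mul_sum, Finset.mul_sum]
        refine Finset.sum_congr rfl fun i _ => by ring
    _ = 0 := by
        refine Finset.sum_eq_zero fun i hi => ?_
        rw [← Finset.mul_sum, horthX ⟨i, Finset.mem_range.mp hi⟩, mul_zero]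

lemma MCaux.gauss (n : ℕ) (hn : 0 < n) (S : Finset ℝ) (c : ℝ → ℝ)
    (hpos : ∀ t ∈ S, 0 < c t) (hcard : n < S.card) :
    ∃ (O : Finset ℝ) (w : ℝ → ℝ), O.card = n ∧ (∀ x ∈ O, 0 ≤ w x) ∧
      (∀ x ∈ O, (∃ a ∈ S, a ≤ x) ∧ (∃ b ∈ S, x ≤ b)) ∧
      ∀ f : ℝ[X], f.natDegree ≤ 2 * n - 1 →
        ∑ x ∈ O, w x * f.eval x = ∑ t ∈ S, c t * f.eval t := by
  classical
  obtain ⟨p, hmon, hnd, horth⟩ := MCaux.exists_orth n hn S c hpos hcard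
  set O : Finset ℝ := p.roots.toFinset.filter (fun r => Odd (p.roots.count r)) with hO
  have hsign : ∀ x : ℝ, 0 ≤ p.eval x * ∏ r ∈ O, (x - r) := MCaux.sign p hmon
  have hsub : O ⊆ p.roots.toFinset := Finset.filter_subset _ _
  have hrootsle : Multiset.card p.roots ≤ n := hnd ▸ p.card_roots'
  have htFle : p.roots.toFinset.card ≤ n :=
    le_trans (Multiset.toFinset_card_le _) hrootsle
  have hOle : O.card ≤ n := le_trans (Finset.card_le_card hsub) htFle
  -- generic vanishing consequence
  have vanish : ∀ g : ℝ[X], g.natDegree < n → (∀ t ∈ S, 0 ≤ p.eval t * g.eval t) →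
      ∀ t ∈ S, p.eval t * g.eval t = 0 := by
    intro g hg hnn t ht
    have h0 := horth g hg
    have := (Finset.sum_eq_zero_iff_of_nonneg
      (fun t ht => mul_nonneg (hpos t ht).le (hnn t ht))).mp h0 t ht
    rcases mul_eq_zero.mp this with h | h
    · exact absurd h (hpos t ht).ne'
    · exact h
  -- eval of products
  have evalprod : ∀ (T : Finset ℝ) (x : ℝ), (∏ r ∈ T, (X - C r)).eval x = ∏ r ∈ T, (x - r) := by
    intro T x; rw [eval_prod]; exact Finset.prod_congr rfl fun r _ => by simp
  have ndprod : ∀ T : Finset ℝ, (∏ r ∈ T, (X - C r : ℝ[X])).natDegree = T.card := by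
    intro T
    rw [natDegree_prod _ _ (fun r _ => X_sub_C_ne_zero r)]
    simp [natDegree_X_sub_C]
  -- Step 1 : O.card = n
  have hOcard : O.card = n := by
    rcases lt_or_eq_of_le hOle with hlt | he
    · exfalso
      set g : ℝ[X] := ∏ r ∈ O, (X - C r) with hg
      have hgn : g.natDegree < n := by rw [hg, ndprod]; exact hlt
      have hz := vanish g hgn (fun t ht => by rw [hg, evalprod]; exact hsign t)
      have hSsub : S ⊆ p.roots.toFinset := by
        intro t ht
        have := hz t ht
        rcases mul_eq_zero.mp this with h | h
        · exact Multiset.mem_toFinset.mpr ((mem_roots hmon.ne_zero).mpr h)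
        · rw [hg, evalprod] at h
          obtain ⟨r, hr, hr0⟩ := Finset.prod_eq_zero_iff.mp h
          have : t = r := by linarith [sub_eq_zero.mp hr0]
          exact this ▸ hsub hr
      have := Finset.card_le_card hSsub
      omega
    · exact he
  -- Step 2 : p = ∏ r ∈ O, (X - C r)
  have hpfac : p = ∏ r ∈ O, (X - C r) := by
    have h1 : ∑ r ∈ p.roots.toFinset, p.roots.count r = Multiset.card p.roots :=
      Multiset.toFinset_sum_count_eq _
    have hge1 : ∀ r ∈ p.roots.toFinset, 1 ≤ p.roots.count r :=
      fun r hr => Multiset.count_pos.mpr (Multiset.mem_toFinset.mp hr)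
    have h2 : ∑ r ∈ O, p.roots.count r ≤ Multiset.card p.roots := by
      rw [← h1]; exact Finset.sum_le_sum_of_subset hsub
    have h3 : n ≤ ∑ r ∈ O, p.roots.count r := by
      calc n = ∑ _r ∈ O, 1 := by rw [Finset.sum_const, hOcard, smul_eq_mul, mul_one]
        _ ≤ _ := Finset.sum_le_sum (fun r hr => hge1 r (hsub hr))
    have hcards : Multiset.card p.roots = n := le_antisymm hrootsle (le_trans h3 h2)
    -- toFinset = O
    have hsd : ∑ r ∈ p.roots.toFinset \ O, p.roots.count r = 0 := by
      have h4 := Finset.sum_sdiff (f := fun r => p.roots.count r) hsub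
      omega
    have htFO : p.roots.toFinset = O := by
      refine Finset.Subset.antisymm ?_ hsub
      intro r hr
      by_contra hrO
      have hmem : r ∈ p.roots.toFinset \ O := Finset.mem_sdiff.mpr ⟨hr, hrO⟩
      have := (Finset.sum_eq_zero_iff.mp hsd) r hmem
      have := hge1 r hr
      omega
    have hcnt : ∀ r ∈ O, p.roots.count r = 1 := by
      intro r hr
      by_contra hne
      have h2le : 2 ≤ p.roots.count r := by
        have := hge1 r (hsub hr); omega
      have : ∑ x ∈ O, p.roots.count x ≥ (∑ _x ∈ O, 1) + 1 := by
        calc ∑ x ∈ O, p.roots.count x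
            = p.roots.count r + ∑ x ∈ O.erase r, p.roots.count x :=
              (Finset.add_sum_erase _ _ hr).symm
          _ ≥ 2 + ∑ x ∈ O.erase r, 1 := by
              gcongr
              exact hge1 _ (hsub (Finset.mem_of_mem_erase ‹_›))
          _ = (∑ _x ∈ O, 1) + 1 := by
              rw [Finset.sum_const, Finset.sum_const, Finset.card_erase_of_mem hr]
              simp only [smul_eq_mul, mul_one]
              have : 1 ≤ O.card := Finset.card_pos.mpr ⟨r, hr⟩
              omega
      simp only [Finset.sum_const, smul_eq_mul, mul_one] at this
      omega
    have hnodup : p.roots.Nodup := by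
      rw [Multiset.nodup_iff_count_le_one]
      intro r
      by_cases hr : r ∈ p.roots
      · rw [hcnt r (htFO ▸ Multiset.mem_toFinset.mpr hr)]
      · rw [Multiset.count_eq_zero_of_notMem hr]; omega
    have hval : p.roots = O.val := by
      rw [← htFO, Multiset.toFinset_val, Multiset.dedup_eq_self.mpr hnodup]
    have := C_leadingCoeff_mul_prod_multiset_X_sub_C (p := p) (by rw [hcards, hnd])
    rw [hmon.leadingCoeff, map_one, one_mul] at this
    rw [← this, hval, Finset.prod_eq_multiset_prod]
  have hpz : ∀ x ∈ O, p.eval x = 0 := by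
    intro x hx
    rw [hpfac, evalprod]
    exact Finset.prod_eq_zero hx (by ring)
  -- Step 3 : location of roots
  have hloc : ∀ x ∈ O, (∃ a ∈ S, a ≤ x) ∧ (∃ b ∈ S, x ≤ b) := by
    intro x₀ hx₀
    have hcerase : (O.erase x₀).card = n - 1 := by rw [Finset.card_erase_of_mem hx₀, hOcard]
    have hSne : ¬ S ⊆ O.erase x₀ := by
      intro hss
      have := Finset.card_le_card hss
      omega
    have keyfac : ∀ t : ℝ, p.eval t * (∏ r ∈ O.erase x₀, (t - r))
        = (t - x₀) * (∏ r ∈ O.erase x₀, (t - r)) ^ 2 := by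
      intro t
      rw [hpfac, evalprod, ← Finset.mul_prod_erase _ _ hx₀]
      ring
    constructor
    · by_contra hno
      push_neg at hno
      set g : ℝ[X] := ∏ r ∈ O.erase x₀, (X - C r) with hg
      have hgn : g.natDegree < n := by rw [hg, ndprod, hcerase]; omega
      have hz := vanish g hgn (fun t ht => by
        rw [hg, evalprod, keyfac]
        have : x₀ < t := hno t ht
        nlinarith [sq_nonneg (∏ r ∈ O.erase x₀, (t - r))])
      apply hSne
      intro t ht
      have h0 := hz t ht
      rw [hg, evalprod, keyfac] at h0
      have htx : t - x₀ ≠ 0 := sub_ne_zero.mpr (hno t ht).ne'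
      have : (∏ r ∈ O.erase x₀, (t - r)) ^ 2 = 0 := by
        rcases mul_eq_zero.mp h0 with h | h
        · exact absurd h htx
        · exact h
      have := pow_eq_zero_iff (n := 2) (by norm_num) |>.mp this
      obtain ⟨r, hr, hr0⟩ := Finset.prod_eq_zero_iff.mp this
      have : t = r := by linarith [sub_eq_zero.mp hr0]
      exact this ▸ hr
    · by_contra hno
      push_neg at hno
      set g : ℝ[X] := - ∏ r ∈ O.erase x₀, (X - C r) with hg
      have hgn : g.natDegree < n := by rw [hg, natDegree_neg, ndprod, hcerase]; omega
      have hz := vanish g hgn (fun t ht => by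
        rw [hg, eval_neg, evalprod, mul_neg, keyfac]
        have : t < x₀ := hno t ht
        nlinarith [sq_nonneg (∏ r ∈ O.erase x₀, (t - r))])
      apply hSne
      intro t ht
      have h0 := hz t ht
      rw [hg, eval_neg, evalprod, mul_neg, keyfac, neg_eq_zero] at h0
      have htx : t - x₀ ≠ 0 := sub_ne_zero.mpr (hno t ht).ne
      have : (∏ r ∈ O.erase x₀, (t - r)) ^ 2 = 0 := by
        rcases mul_eq_zero.mp h0 with h | h
        · exact absurd h htx
        · exact h
      have := pow_eq_zero_iff (n := 2) (by norm_num) |>.mp this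
      obtain ⟨r, hr, hr0⟩ := Finset.prod_eq_zero_iff.mp this
      have : t = r := by linarith [sub_eq_zero.mp hr0]
      exact this ▸ hr
  -- Step 4 : weights
  have hinj : Set.InjOn id (O : Set ℝ) := Function.injective_id.injOn
  set w : ℝ → ℝ := fun x => ∑ t ∈ S, c t * (Lagrange.basis O id x).eval t with hw
  have hdegp : p.degree = (n : ℕ) := by
    rw [degree_eq_natDegree hmon.ne_zero, hnd]
  have hexact : ∀ f : ℝ[X], f.natDegree ≤ 2 * n - 1 →
      ∑ x ∈ O, w x * f.eval x = ∑ t ∈ S, c t * f.eval t := by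
    intro f hf
    set r : ℝ[X] := f %ₘ p with hrdef
    set d : ℝ[X] := f /ₘ p with hddef
    have hfeq : r + p * d = f := modByMonic_add_div f p
    have hdd : d.natDegree < n := by
      have h1 : d.natDegree = f.natDegree - p.natDegree := natDegree_divByMonic f hmon
      omega
    have hdegr : r.degree < (O.card : ℕ) := by
      rw [hOcard]
      exact lt_of_lt_of_le (degree_modByMonic_lt f hmon) (le_of_eq hdegp)
    have hrinterp : r = Lagrange.interpolate O id fun x => r.eval (id x) :=
      Lagrange.eq_interpolate hinj hdegr
    have hevalr : ∀ t : ℝ, r.eval t = ∑ x ∈ O, r.eval x * (Lagrange.basis O id x).eval t := by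
      intro t
      conv_lhs => rw [hrinterp]
      rw [Lagrange.interpolate_apply, eval_finset_sum]
      exact Finset.sum_congr rfl fun x _ => by rw [eval_mul, eval_C, id]
    have hrf : ∀ x ∈ O, r.eval x = f.eval x := by
      intro x hx
      have := congrArg (Polynomial.eval x) hfeq
      rw [eval_add, eval_mul, hpz x hx, zero_mul, add_zero] at this
      exact this
    calc ∑ x ∈ O, w x * f.eval x
        = ∑ x ∈ O, ∑ t ∈ S, c t * (f.eval x * (Lagrange.basis O id x).eval t) := by
          refine Finset.sum_congr rfl fun x _ => ?_
          simp only [hw]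
          rw [Finset.sum_mul]
          exact Finset.sum_congr rfl fun t _ => by ring
      _ = ∑ t ∈ S, c t * r.eval t := by
          rw [Finset.sum_comm]
          refine Finset.sum_congr rfl fun t ht => ?_
          rw [hevalr t, Finset.mul_sum]
          refine Finset.sum_congr rfl fun x hx => by rw [hrf x hx]
      _ = ∑ t ∈ S, c t * f.eval t := by
          have hsplit : ∀ t : ℝ, c t * f.eval t
              = c t * (p.eval t * d.eval t) + c t * r.eval t := by
            intro t
            conv_lhs => rw [← hfeq]
            simp only [eval_add, eval_mul]
            try ring
          rw [show (∑ t ∈ S, c t * f.eval t)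
              = ∑ t ∈ S, (c t * (p.eval t * d.eval t) + c t * r.eval t) from
            Finset.sum_congr rfl fun t _ => hsplit t]
          rw [Finset.sum_add_distrib, horth d hdd, zero_add]
  have hwnn : ∀ x ∈ O, 0 ≤ w x := by
    intro x hx
    have hbnd : ((Lagrange.basis O id x) ^ 2).natDegree ≤ 2 * n - 1 := by
      rw [natDegree_pow, Lagrange.natDegree_basis hinj hx, hOcard]
      omega
    have := hexact ((Lagrange.basis O id x) ^ 2) hbnd
    have hRHS : ∑ x' ∈ O, w x' * ((Lagrange.basis O id x) ^ 2).eval x' = w x := by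
      rw [Finset.sum_eq_single x (fun x' hx' hne => ?_) (fun hxx => absurd hx hxx)]
      · rw [eval_pow]
        have hb := Lagrange.eval_basis_self hinj hx
        simp only [id_eq] at hb
        rw [hb]; norm_num
      · rw [eval_pow]
        have hb := Lagrange.eval_basis_of_ne (v := id) (fun hc => hne hc.symm) hx'
        simp only [id_eq] at hb
        rw [hb]; norm_num
    rw [hRHS] at this
    rw [this]
    refine Finset.sum_nonneg fun t ht => ?_
    rw [eval_pow]
    exact mul_nonneg (hpos t ht).le (sq_nonneg _)
  exact ⟨O, w, hOcard, hwnn, hloc, hexact⟩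


/-- For odd `N`, every point of the convex hull of the moment curve
`t ↦ (t, t², …, t^N)` over `[t_min, t_max]` is a convex combination of at most
`(N+1)/2` points of the curve. -/
theorem convexHull_momentCurve_odd (N : ℕ) (hN : Odd N) (tmin tmax : ℝ) (h : tmin < tmax)
    (v : Fin N → ℝ)
    (hv : v ∈ convexHull ℝ ((fun t : ℝ => fun i : Fin N => t ^ ((i : ℕ) + 1)) ''
      Set.Icc tmin tmax)) :
    ∃ c t : Fin ((N + 1) / 2) → ℝ,
      (∀ j, 0 ≤ c j) ∧ (∑ j, c j = 1) ∧ (∀ j, t j ∈ Set.Icc tmin tmax) ∧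
      (∀ i : Fin N, ∑ j, c j * t j ^ ((i : ℕ) + 1) = v i) := by
  classical
  obtain ⟨k, hk⟩ := hN
  set n : ℕ := (N + 1) / 2 with hndef
  have hn2 : 2 * n = N + 1 := by omega
  have hn : 0 < n := by omega
  rw [_root_.convexHull_eq, Set.mem_setOf_eq] at hv
  obtain ⟨ι, T, wgt, z, hw0, hw1, hzs, hcm⟩ := hv
  have hu' : ∀ i ∈ T, ∃ s, s ∈ Set.Icc tmin tmax ∧
      (fun l : Fin N => s ^ ((l : ℕ) + 1)) = z i := by
    intro i hi
    obtain ⟨s, hs, hse⟩ := hzs i hi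
    exact ⟨s, hs, hse⟩
  choose! u hu1 hu2 using hu'
  have hcm' : ∀ l : Fin N, ∑ i ∈ T, wgt i * u i ^ ((l : ℕ) + 1) = v l := by
    intro l
    rw [Finset.centerMass_eq_of_sum_1 _ _ hw1] at hcm
    have := congrFun hcm l
    rw [Finset.sum_apply] at this
    rw [← this]
    refine Finset.sum_congr rfl fun i hi => ?_
    rw [← hu2 i hi]
    simp
  set T' : Finset ι := T.filter (fun i => wgt i ≠ 0) with hT'
  set S : Finset ℝ := T'.image u with hS
  set cS : ℝ → ℝ := fun r => ∑ i ∈ T'.filter (fun i => u i = r), wgt i with hcS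
  have hmaps : ∀ i ∈ T', u i ∈ S := fun i hi => Finset.mem_image_of_mem u hi
  have key : ∀ g : ℝ → ℝ, ∑ r ∈ S, cS r * g r = ∑ i ∈ T, wgt i * g (u i) := by
    intro g
    have h1 : ∀ r ∈ S, cS r * g r = ∑ i ∈ T'.filter (fun i => u i = r), wgt i * g (u i) := by
      intro r _
      rw [hcS]
      rw [Finset.sum_mul]
      refine Finset.sum_congr rfl fun i hi => ?_
      rw [(Finset.mem_filter.mp hi).2]
    rw [Finset.sum_congr rfl h1, Finset.sum_fiberwise_of_maps_to hmaps]
    rw [hT']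
    refine Finset.sum_filter_of_ne fun i _ hne => ?_
    intro hw
    exact hne (by rw [hw, zero_mul])
  have hSicc : ∀ r ∈ S, r ∈ Set.Icc tmin tmax := by
    intro r hr
    obtain ⟨i, hi, rfl⟩ := Finset.mem_image.mp hr
    exact hu1 i (Finset.mem_of_mem_filter i hi)
  have hSpos : ∀ r ∈ S, 0 < cS r := by
    intro r hr
    obtain ⟨i, hi, rfl⟩ := Finset.mem_image.mp hr
    refine Finset.sum_pos ?_ ⟨i, Finset.mem_filter.mpr ⟨hi, rfl⟩⟩
    intro j hj
    have hj' := Finset.mem_filter.mp (Finset.mem_of_mem_filter j hj)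
    exact lt_of_le_of_ne (hw0 j hj'.1) (Ne.symm hj'.2)
  have hsum1 : ∑ r ∈ S, cS r = 1 := by
    have := key (fun _ => 1)
    simpa [hw1] using this
  have hmom : ∀ l : Fin N, ∑ r ∈ S, cS r * r ^ ((l : ℕ) + 1) = v l := by
    intro l
    rw [key (fun r => r ^ ((l : ℕ) + 1))]
    exact hcm' l
  by_cases hcle : S.card ≤ n
  · obtain ⟨c, t, hmemb, hgsum⟩ := MCaux.finset_to_fin tmin n S cS hcle
    refine ⟨c, t, ?_, ?_, ?_, ?_⟩
    · intro j
      rcases hmemb j with ⟨hc, hmem⟩ | ⟨hc, _⟩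
      · rw [hc]; exact (hSpos _ hmem).le
      · rw [hc]
    · have := hgsum (fun _ => 1)
      simpa [hsum1] using this
    · intro j
      rcases hmemb j with ⟨_, hmem⟩ | ⟨_, ht⟩
      · exact hSicc _ hmem
      · rw [ht]; exact ⟨le_refl _, h.le⟩
    · intro l
      rw [hgsum (fun r => r ^ ((l : ℕ) + 1))]
      exact hmom l
  · push_neg at hcle
    obtain ⟨O, w, hOcard, hwnn, hloc, hexact⟩ := MCaux.gauss n hn S cS hSpos hcle
    obtain ⟨c, t, hmemb, hgsum⟩ := MCaux.finset_to_fin tmin n O w (le_of_eq hOcard)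
    have hO1 : ∑ x ∈ O, w x = 1 := by
      have := hexact 1 (by simp)
      simpa [hsum1] using this
    have hOmom : ∀ l : Fin N, ∑ x ∈ O, w x * x ^ ((l : ℕ) + 1) = v l := by
      intro l
      have hdeg : ((X : ℝ[X]) ^ ((l : ℕ) + 1)).natDegree ≤ 2 * n - 1 := by
        rw [natDegree_X_pow]
        have := l.isLt
        omega
      have := hexact (X ^ ((l : ℕ) + 1)) hdeg
      simp only [eval_pow, eval_X] at this
      rw [this]
      exact hmom l
    refine ⟨c, t, ?_, ?_, ?_, ?_⟩
    · intro j
      rcases hmemb j with ⟨hc, hmem⟩ | ⟨hc, _⟩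
      · rw [hc]; exact hwnn _ hmem
      · rw [hc]
    · have := hgsum (fun _ => 1)
      simpa [hO1] using this
    · intro j
      rcases hmemb j with ⟨_, hmem⟩ | ⟨_, ht⟩
      · obtain ⟨⟨a, ha, hax⟩, ⟨b, hb, hxb⟩⟩ := hloc _ hmem
        exact ⟨(hSicc a ha).1.trans hax, hxb.trans (hSicc b hb).2⟩
      · rw [ht]; exact ⟨le_refl _, h.le⟩
    · intro l
      rw [hgsum (fun r => r ^ ((l : ℕ) + 1))]
      exact hOmom l
end

section
/- Let N be even, let t_min < t_max be reals, and let C_N(t) = (t, t^2, ..., t^N). Every point in the convex hull of the image of C_N over [t_min, t_max] can be written as a convex combination of at most (N+2)/2 points on the curve, one of which may be required to be C_N(t_min). -/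
open Set Filter Polynomial Topology



lemma aux_isCompact_convexHull {d : ℕ} {s : Set (Fin d → ℝ)} (hs : IsCompact s)
    (hne : s.Nonempty) : IsCompact (convexHull ℝ s) := by
  classical
  obtain ⟨p0, hp0⟩ := hne
  set n := d + 1 with hn
  set D : Set ((Fin n → ℝ) × (Fin n → Fin d → ℝ)) :=
    stdSimplex ℝ (Fin n) ×ˢ Set.univ.pi (fun _ => s) with hD
  have hDc : IsCompact D := (isCompact_stdSimplex (𝕜 := ℝ) (ι := Fin n)).prod (isCompact_univ_pi fun _ => hs)
  set f : (Fin n → ℝ) × (Fin n → Fin d → ℝ) → (Fin d → ℝ) :=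
    (fun p => ∑ i : Fin n, p.1 i • p.2 i) with hf
  have hfc : Continuous f := continuous_finset_sum _ fun i _ =>
    ((continuous_apply i).comp continuous_fst).smul ((continuous_apply i).comp continuous_snd)
  have himg : convexHull ℝ s = f '' D := by
    apply Set.Subset.antisymm
    · intro x hx
      obtain ⟨ι, hfin, z, w, hrange, haff, hwpos, hwsum, hxx⟩ :=
        eq_pos_convex_span_of_mem_convexHull hx
      haveI inst : Fintype ι := hfin
      obtain rfl : inst = hfin := Subsingleton.elim inst hfin
      have hcard : Fintype.card ι ≤ n := by
        have h1 := haff.card_le_finrank_succ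
        have h2 : Module.finrank ℝ ↥(vectorSpan ℝ (Set.range z)) ≤ d := by
          have := Submodule.finrank_le (vectorSpan ℝ (Set.range z))
          simpa [Module.finrank_pi] using this
        omega
      obtain ⟨e⟩ : Nonempty (ι ↪ Fin n) := by
        apply Function.Embedding.nonempty_of_card_le
        simpa using hcard
      set W : Fin n → ℝ := fun k => if h : ∃ i, e i = k then w h.choose else 0 with hW
      set Z : Fin n → Fin d → ℝ := fun k => if h : ∃ i, e i = k then z h.choose else p0 with hZ
      have hWe : ∀ i : ι, W (e i) = w i := by
        intro i
        have h : ∃ j, e j = e i := ⟨i, rfl⟩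
        simp only [hW, dif_pos h]
        exact congrArg w (e.injective h.choose_spec)
      have hZe : ∀ i : ι, Z (e i) = z i := by
        intro i
        have h : ∃ j, e j = e i := ⟨i, rfl⟩
        simp only [hZ, dif_pos h]
        exact congrArg z (e.injective h.choose_spec)
      have hsumW : ∀ {M : Type} [AddCommMonoid M] (F : ℝ → (Fin d → ℝ) → M),
          (∀ y, F 0 y = 0) → ∑ k : Fin n, F (W k) (Z k) = ∑ i : ι, F (w i) (z i) := by
        intro M _ F hF0
        rw [← Finset.sum_subset (Finset.subset_univ (Finset.image e Finset.univ))]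
        · rw [Finset.sum_image (fun a _ b _ h => e.injective h)]
          exact Finset.sum_congr rfl fun i _ => by rw [hWe, hZe]
        · intro k _ hk
          have : ¬∃ i, e i = k := by
            intro ⟨i, hi⟩
            exact hk (Finset.mem_image.mpr ⟨i, Finset.mem_univ i, hi⟩)
          simp only [hW, dif_neg this]
          exact hF0 _
      have hWsum : ∑ k : Fin n, W k = 1 := by
        have := hsumW (fun c _ => c) (fun _ => rfl)
        rw [this]; exact hwsum
      have hWZ : ∑ k : Fin n, W k • Z k = x := by
        have := hsumW (fun c y => c • y) (fun y => zero_smul ℝ y)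
        rw [this]; exact hxx
      refine ⟨(W, Z), ⟨⟨fun k => ?_, hWsum⟩, fun k _ => ?_⟩, hWZ⟩
      · by_cases h : ∃ i, e i = k
        · simp only [hW, dif_pos h]; exact (hwpos _).le
        · simp only [hW, dif_neg h]; exact le_refl 0
      · by_cases h : ∃ i, e i = k
        · simp only [hZ, dif_pos h]; exact hrange ⟨_, rfl⟩
        · simp only [hZ, dif_neg h]; exact hp0
    · rintro x ⟨⟨w, zf⟩, ⟨hw, hz⟩, rfl⟩
      have h1 : ∀ i ∈ Finset.univ, (0:ℝ) ≤ w i := fun i _ => hw.1 i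
      have h2 : (0:ℝ) < ∑ i : Fin n, w i := by rw [hw.2]; norm_num
      have h3 : ∀ i ∈ Finset.univ, zf i ∈ s := fun i _ => hz i (Set.mem_univ i)
      have := Finset.centerMass_mem_convexHull Finset.univ h1 h2 h3
      rwa [Finset.centerMass_eq_of_sum_1 _ _ hw.2] at this
  rw [himg]
  exact hDc.image hfc


lemma aux_root_count (m : ℕ) (a b : ℝ) (q : Polynomial ℝ) (hq : q ≠ 0)
    (hdeg : q.natDegree ≤ 2 * m) (hpos : ∀ x ∈ Set.Icc a b, 0 ≤ q.eval x)
    (F : Finset ℝ) (hF : ∀ x ∈ F, x ∈ Set.Ioc a b ∧ q.eval x = 0) : F.card ≤ m := by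
  classical
  by_contra hcard
  push_neg at hcard
  obtain ⟨F', hF'sub, hF'card⟩ := Finset.exists_subset_card_eq (by omega : m + 1 ≤ F.card)
  set r : Fin (m + 1) → ℝ := fun i => ((F'.orderIsoOfFin hF'card) i : ℝ) with hr
  have hrmono : StrictMono r := by
    intro i j hij
    exact_mod_cast (F'.orderIsoOfFin hF'card).strictMono hij
  have hrmem : ∀ i, r i ∈ F := fun i => hF'sub ((F'.orderIsoOfFin hF'card) i).2
  have hroot : ∀ i, q.eval (r i) = 0 := fun i => (hF _ (hrmem i)).2
  have hIoc : ∀ i, r i ∈ Set.Ioc a b := fun i => (hF _ (hrmem i)).1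
  rcases Nat.eq_zero_or_pos q.natDegree with hd0 | hdpos
  · obtain ⟨c, hc⟩ := Polynomial.natDegree_eq_zero.mp hd0
    have h0 := hroot 0
    rw [← hc] at h0
    simp only [eval_C] at h0
    exact hq (by rw [← hc, h0, map_zero])
  have hq' : q.derivative ≠ 0 := fun hzero =>
    absurd (Polynomial.natDegree_eq_zero_of_derivative_eq_zero hzero) (by omega)
  -- Rolle points
  have hrolle : ∀ i : Fin m, ∃ x, x ∈ Set.Ioo (r i.castSucc) (r i.succ) ∧
      q.derivative.eval x = 0 := by
    intro i
    have h1 : r i.castSucc < r i.succ := hrmono Fin.castSucc_lt_succ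
    obtain ⟨x, hx1, hx2⟩ := exists_deriv_eq_zero h1
      (q.continuous.continuousOn) (by rw [hroot, hroot])
    refine ⟨x, hx1, ?_⟩
    rw [← Polynomial.deriv]
    exact hx2
  choose ρ hρIoo hρroot using hrolle
  -- interior local minima
  have hminroot : ∀ i : Fin m, q.derivative.eval (r i.castSucc) = 0 := by
    intro i
    have hlt_b : r i.castSucc < b :=
      lt_of_lt_of_le (hrmono (Fin.castSucc_lt_last i)) (hIoc (Fin.last m)).2
    have ha_lt : a < r i.castSucc := (hIoc _).1
    have hmin : IsLocalMin (fun x => q.eval x) (r i.castSucc) := by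
      have hnhds : Set.Ioo a b ∈ nhds (r i.castSucc) := Ioo_mem_nhds ha_lt hlt_b
      filter_upwards [hnhds] with x hx
      rw [hroot]
      exact hpos x (Set.Ioo_subset_Icc_self hx)
    have := hmin.deriv_eq_zero
    rwa [Polynomial.deriv] at this
  -- assemble 2m distinct roots of q'
  set G1 : Finset ℝ := Finset.image (fun i : Fin m => r i.castSucc) Finset.univ with hG1
  set G2 : Finset ℝ := Finset.image ρ Finset.univ with hG2
  have hG1card : G1.card = m := by
    have hinj : Function.Injective (fun i : Fin m => r i.castSucc) :=
      fun i j hij => Fin.castSucc_injective m (hrmono.injective hij)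
    rw [hG1, Finset.card_image_of_injective _ hinj, Finset.card_univ, Fintype.card_fin]
  have hρmono : StrictMono ρ := by
    intro i j hij
    calc ρ i < r i.succ := (hρIoo i).2
    _ ≤ r j.castSucc := hrmono.monotone (by
        rw [Fin.le_def]
        simp only [Fin.val_succ, Fin.coe_castSucc]
        omega)
    _ < ρ j := (hρIoo j).1
  have hG2card : G2.card = m := by
    rw [hG2, Finset.card_image_of_injective _ hρmono.injective, Finset.card_univ,
      Fintype.card_fin]
  have hdisj : Disjoint G1 G2 := by
    rw [Finset.disjoint_left]
    rintro x hx1 hx2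
    rw [hG1, Finset.mem_image] at hx1
    rw [hG2, Finset.mem_image] at hx2
    obtain ⟨j, _, hj⟩ := hx1
    obtain ⟨i, _, hi⟩ := hx2
    have h1 : r i.castSucc < r j.castSucc := by rw [hj, ← hi]; exact (hρIoo i).1
    have h2 : r j.castSucc < r i.succ := by rw [hj, ← hi]; exact (hρIoo i).2
    have h1' := hrmono.lt_iff_lt.mp h1
    have h2' := hrmono.lt_iff_lt.mp h2
    rw [Fin.lt_def] at h1' h2'
    simp only [Fin.coe_castSucc, Fin.val_succ] at h1' h2'
    omega
  have hsub : G1 ∪ G2 ⊆ q.derivative.roots.toFinset := by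
    intro x hx
    rw [Multiset.mem_toFinset, Polynomial.mem_roots hq']
    rcases Finset.mem_union.mp hx with hx | hx
    · rw [hG1, Finset.mem_image] at hx
      obtain ⟨i, _, hi⟩ := hx
      rw [← hi]
      exact hminroot i
    · rw [hG2, Finset.mem_image] at hx
      obtain ⟨i, _, hi⟩ := hx
      rw [← hi]
      exact hρroot i
  have hcard2m : (G1 ∪ G2).card = 2 * m := by
    rw [Finset.card_union_of_disjoint hdisj, hG1card, hG2card]
    omega
  have hle : (G1 ∪ G2).card ≤ q.derivative.natDegree := by
    calc (G1 ∪ G2).card ≤ q.derivative.roots.toFinset.card := Finset.card_le_card hsub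
    _ ≤ Multiset.card q.derivative.roots := Multiset.toFinset_card_le _
    _ ≤ q.derivative.natDegree := Polynomial.card_roots' _
  have hlt := Polynomial.natDegree_derivative_lt (by omega : q.natDegree ≠ 0)
  omega


set_option maxHeartbeats 1000000 in
/-- For even `N`, every point of the convex hull of the moment curve
`t ↦ (t, t², …, t^N)` over `[t_min, t_max]` is a convex combination of at most
`(N+2)/2` points of the curve, one of which can be required to be at `t_min`. -/
theorem convexHull_momentCurve_even (N : ℕ) (hN : Even N) (hNpos : 0 < N)
    (tmin tmax : ℝ) (h : tmin < tmax) (v : Fin N → ℝ)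
    (hv : v ∈ convexHull ℝ ((fun t : ℝ => fun i : Fin N => t ^ ((i : ℕ) + 1)) ''
      Set.Icc tmin tmax)) :
    ∃ c t : Fin ((N + 2) / 2) → ℝ,
      (∀ j, 0 ≤ c j) ∧ (∑ j, c j = 1) ∧ (∀ j, t j ∈ Set.Icc tmin tmax) ∧
      t ⟨0, by omega⟩ = tmin ∧
      (∀ i : Fin N, ∑ j, c j * t j ^ ((i : ℕ) + 1) = v i) := by
  classical
  obtain ⟨m, hm⟩ := hN
  have hm1 : 1 ≤ m := by omega
  have hsize : (N + 2) / 2 = m + 1 := by omega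
  set φ : ℝ → (Fin N → ℝ) := fun t => fun i : Fin N => t ^ ((i : ℕ) + 1) with hφ
  set Cset : Set (Fin N → ℝ) := φ '' Set.Icc tmin tmax with hCset
  set K : Set (Fin N → ℝ) := convexHull ℝ Cset with hK
  have hφcont : Continuous φ := continuous_pi fun i => continuous_pow _
  have hCne : Cset.Nonempty := ⟨φ tmin, ⟨tmin, ⟨le_refl _, h.le⟩, rfl⟩⟩
  have hCcpt : IsCompact Cset := isCompact_Icc.image hφcont
  have hKcpt : IsCompact K := aux_isCompact_convexHull hCcpt hCne
  have hKcl : IsClosed K := hKcpt.isClosed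
  have hKconv : Convex ℝ K := convex_convexHull ℝ _
  have hvK : v ∈ K := hv
  have hCK : Cset ⊆ K := subset_convexHull ℝ _
  have hφK : ∀ x ∈ Set.Icc tmin tmax, φ x ∈ K := fun x hx => hCK ⟨x, hx, rfl⟩
  set A : Fin N → ℝ := φ tmin with hA
  have hAK : A ∈ K := hφK tmin ⟨le_refl _, h.le⟩
  -- the compact set of admissible weights on A
  set gm : ℝ × (Fin N → ℝ) → (Fin N → ℝ) := fun p => p.1 • A + (1 - p.1) • p.2 with hgm
  have hgmc : Continuous gm := (continuous_fst.smul continuous_const).add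
    ((continuous_const.sub continuous_fst).smul continuous_snd)
  set S : Set (ℝ × (Fin N → ℝ)) := (Set.Icc (0:ℝ) 1 ×ˢ K) ∩ gm ⁻¹' {v} with hS
  have hScpt : IsCompact S := (isCompact_Icc.prod hKcpt).inter_right
    (isClosed_singleton.preimage hgmc)
  set L : Set ℝ := Prod.fst '' S with hL
  have hLcpt : IsCompact L := hScpt.image continuous_fst
  have hLne : L.Nonempty := ⟨0, ⟨(0, v), ⟨⟨⟨le_refl 0, zero_le_one⟩, hvK⟩, by
    simp [hgm]⟩, rfl⟩⟩
  have hlamL : sSup L ∈ L := hLcpt.sSup_mem hLne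
  obtain ⟨⟨lam, y0⟩, ⟨⟨hlamIcc, hy0K⟩, hrepv'⟩, hl⟩ := hlamL
  have hrepv : lam • A + (1 - lam) • y0 = v := hrepv'
  have hlam0 : 0 ≤ lam := hlamIcc.1
  have hlam1 : lam ≤ 1 := hlamIcc.2
  have hl' : lam = sSup L := hl
  rcases eq_or_lt_of_le hlam1 with hlameq | hlamlt
  · -- degenerate case : v = A
    have hvA : A = v := by
      rw [hlameq] at hrepv
      simpa using hrepv
    refine ⟨fun k => if k = ⟨0, by omega⟩ then 1 else 0, fun _ => tmin, ?_, ?_, ?_, rfl, ?_⟩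
    · intro j; dsimp only; split_ifs <;> norm_num
    · simp
    · intro j; exact ⟨le_refl _, h.le⟩
    · intro i
      simp only [ite_mul, zero_mul, one_mul, Finset.sum_ite_eq', Finset.mem_univ, if_true]
      exact congrFun hvA i
  · -- main case
    have hone : 0 < 1 - lam := by linarith
    have hLbdd : BddAbove L := hLcpt.bddAbove
    -- no further mass can be moved to A
    have hno : ∀ s : ℝ, 0 < s → y0 + s • (y0 - A) ∉ K := by
      intro s hs hmem
      have hs1 : (0:ℝ) < 1 + s := by linarith
      set lam2 : ℝ := lam + (1 - lam) * s / (1 + s) with hlam2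
      have hlam2gt : lam < lam2 := by
        rw [hlam2]
        have : 0 < (1 - lam) * s / (1 + s) := by positivity
        linarith
      have hlam2le : lam2 ≤ 1 := by
        have h9 : (1 - lam) * s / (1 + s) ≤ 1 - lam := by
          rw [div_le_iff₀ hs1]; nlinarith
        rw [hlam2]; linarith
      have heq : gm (lam2, y0 + s • (y0 - A)) = v := by
        funext i
        have hco := congrFun hrepv i
        simp only [Pi.add_apply, Pi.smul_apply, Pi.sub_apply, smul_eq_mul] at hco
        simp only [hgm, Pi.add_apply, Pi.smul_apply, Pi.sub_apply, smul_eq_mul, hlam2]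
        rw [← hco]
        field_simp
        ring
      have h2 : lam2 ∈ L := ⟨(lam2, y0 + s • (y0 - A)), ⟨⟨⟨by linarith, hlam2le⟩, hmem⟩, heq⟩, rfl⟩
      have hle := le_csSup hLbdd h2
      rw [← hl'] at hle
      linarith
    -- separating functionals
    have hz : ∀ n : ℕ, y0 + (1/((n:ℝ)+1)) • (y0 - A) ∉ K := fun n => hno _ (by positivity)
    have hsep : ∀ n : ℕ, ∃ f : (Fin N → ℝ) →L[ℝ] ℝ, ∃ u : ℝ,
        (∀ y ∈ K, f y < u) ∧ u < f (y0 + (1/((n:ℝ)+1)) • (y0 - A)) :=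
      fun n => geometric_hahn_banach_closed_point hKconv hKcl (hz n)
    choose f u hfu hfu2 using hsep
    have hfne : ∀ n, f n ≠ 0 := by
      intro n h0
      have h1 := hfu n A hAK
      have h2 := hfu2 n
      rw [h0] at h1 h2
      simp only [ContinuousLinearMap.zero_apply] at h1 h2
      linarith
    set g : ℕ → (Fin N → ℝ) →L[ℝ] ℝ := fun n => ‖f n‖⁻¹ • f n with hg
    have hgnorm : ∀ n, ‖g n‖ = 1 := by
      intro n
      show ‖‖f n‖⁻¹ • f n‖ = 1
      rw [norm_smul (‖f n‖⁻¹) (f n), norm_inv, norm_norm]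
      exact inv_mul_cancel₀ (norm_ne_zero_iff.mpr (hfne n))
    have hgle : ∀ n, ∀ y ∈ K, g n y ≤ g n y0 + (1/((n:ℝ)+1)) * (g n (y0 - A)) := by
      intro n y hy
      have h1 : f n y < f n y0 + (1/((n:ℝ)+1)) * (f n (y0 - A)) := by
        have h2 := lt_trans (hfu n y hy) (hfu2 n)
        rwa [map_add, map_smul, smul_eq_mul] at h2
      have hpos : (0:ℝ) ≤ ‖f n‖⁻¹ := inv_nonneg.mpr (norm_nonneg _)
      have h3 := mul_le_mul_of_nonneg_left h1.le hpos
      calc g n y = ‖f n‖⁻¹ * (f n y) := by simp [hg]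
      _ ≤ ‖f n‖⁻¹ * (f n y0 + (1/((n:ℝ)+1)) * f n (y0 - A)) := h3
      _ = g n y0 + (1/((n:ℝ)+1)) * g n (y0 - A) := by simp [hg]; ring
    have hsph : ∀ n, g n ∈ Metric.sphere (0 : (Fin N → ℝ) →L[ℝ] ℝ) 1 := by
      intro n
      simp [Metric.mem_sphere, dist_zero_right, hgnorm n]
    obtain ⟨glim, hglim_mem, ψ, hψmono, hψtend⟩ := (isCompact_sphere
      (0 : (Fin N → ℝ) →L[ℝ] ℝ) 1).tendsto_subseq hsph
    have hglim_norm : ‖glim‖ = 1 := by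
      simpa [Metric.mem_sphere, dist_zero_right] using hglim_mem
    have happly : ∀ x : Fin N → ℝ,
        Tendsto (fun n => g (ψ n) x) atTop (𝓝 (glim x)) := by
      intro x
      have hc : Continuous (fun T : (Fin N → ℝ) →L[ℝ] ℝ => T x) :=
        (ContinuousLinearMap.apply ℝ ℝ x).continuous
      exact (hc.tendsto glim).comp hψtend
    have hstend : Tendsto (fun n => (1/((ψ n : ℝ)+1))) atTop (𝓝 0) :=
      tendsto_one_div_add_atTop_nhds_zero_nat.comp hψmono.tendsto_atTop
    have hgmax : ∀ y ∈ K, glim y ≤ glim y0 := by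
      intro y hy
      have h1 : ∀ n, g (ψ n) y ≤ g (ψ n) y0 + (1/((ψ n : ℝ)+1)) * g (ψ n) (y0 - A) :=
        fun n => hgle (ψ n) y hy
      have h2 : Tendsto (fun n => g (ψ n) y0 + (1/((ψ n : ℝ)+1)) * g (ψ n) (y0 - A)) atTop
          (𝓝 (glim y0 + 0 * glim (y0 - A))) :=
        (happly y0).add (hstend.mul (happly (y0 - A)))
      have h3 := le_of_tendsto_of_tendsto' (happly y) h2 h1
      simpa using h3
    -- build the polynomial
    set gc : Fin N → ℝ := fun i => glim (fun j => if i = j then (1:ℝ) else 0) with hgc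
    have hgsum : ∀ x : Fin N → ℝ, glim x = ∑ i, x i * gc i := by
      intro x
      conv_lhs => rw [pi_eq_sum_univ x]
      rw [map_sum]
      exact Finset.sum_congr rfl fun i _ => by rw [map_smul, smul_eq_mul]
    set q : Polynomial ℝ := Polynomial.C (glim y0) -
      ∑ i : Fin N, Polynomial.C (gc i) * Polynomial.X ^ ((i:ℕ)+1) with hqdef
    have hqeval : ∀ x : ℝ, q.eval x = glim y0 - glim (φ x) := by
      intro x
      rw [hqdef]
      rw [Polynomial.eval_sub, Polynomial.eval_C, Polynomial.eval_finset_sum]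
      simp only [Polynomial.eval_mul, Polynomial.eval_C, Polynomial.eval_pow, Polynomial.eval_X]
      rw [hgsum (φ x)]
      congr 1
      refine Finset.sum_congr rfl fun i _ => ?_
      rw [hφ]
      ring
    have hqpos : ∀ x ∈ Set.Icc tmin tmax, 0 ≤ q.eval x := by
      intro x hx
      rw [hqeval]
      have := hgmax (φ x) (hφK x hx)
      linarith
    have hqdeg : q.natDegree ≤ 2 * m := by
      rw [hqdef]
      refine le_trans (Polynomial.natDegree_sub_le _ _) ?_
      rw [max_le_iff]
      constructor
      · rw [Polynomial.natDegree_C]; omega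
      · refine le_trans (Polynomial.natDegree_sum_le _ _) ?_
        rw [Finset.fold_max_le]
        refine ⟨by omega, fun i _ => ?_⟩
        refine le_trans (Polynomial.natDegree_C_mul_le _ _) ?_
        rw [Polynomial.natDegree_X_pow]
        omega
    have hcoeff : ∀ i : Fin N, q.coeff ((i:ℕ)+1) = -(gc i) := by
      intro i
      rw [hqdef, Polynomial.coeff_sub, Polynomial.coeff_C, if_neg (by omega : ¬(i:ℕ)+1 = 0),
        Polynomial.finset_sum_coeff]
      simp only [Polynomial.coeff_C_mul, Polynomial.coeff_X_pow]
      have hterm : ∀ j : Fin N, gc j * (if (i:ℕ)+1 = (j:ℕ)+1 then (1:ℝ) else 0) =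
          if j = i then gc j else 0 := by
        intro j
        by_cases hji : j = i
        · subst hji; simp
        · rw [if_neg, if_neg hji, mul_zero]
          intro hcon
          exact hji (Fin.ext (by omega))
      rw [Finset.sum_congr rfl fun j _ => hterm j, Finset.sum_ite_eq' Finset.univ i]
      simp
    have hqne : q ≠ 0 := by
      intro h0
      have hgc0 : ∀ i : Fin N, gc i = 0 := by
        intro i
        have := hcoeff i
        rw [h0, Polynomial.coeff_zero] at this
        linarith [this]
      have hglim0 : glim = 0 := by
        ext x
        rw [hgsum x]
        simp [hgc0]
      rw [hglim0] at hglim_norm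
      simp at hglim_norm
    -- representation of y0
    rw [hK, convexHull_eq] at hy0K
    obtain ⟨ι, J, W, Z, hWpos, hWsum, hZC, hcm⟩ := hy0K
    rw [Finset.centerMass_eq_of_sum_1 _ _ hWsum] at hcm
    have hcm2 : ∑ j ∈ J, W j • Z j = y0 := hcm
    have hu : ∀ j ∈ J, ∃ x, x ∈ Set.Icc tmin tmax ∧ φ x = Z j := by
      intro j hj
      obtain ⟨x, hx1, hx2⟩ := hZC j hj
      exact ⟨x, hx1, hx2⟩
    choose! uu huIcc huφ using hu
    have hzero : ∀ j ∈ J, W j ≠ 0 → q.eval (uu j) = 0 := by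
      intro j hj hWj
      have hgy0 : glim y0 = ∑ j ∈ J, W j * glim (Z j) := by
        conv_lhs => rw [← hcm2]
        rw [map_sum]
        exact Finset.sum_congr rfl fun j _ => by rw [map_smul, smul_eq_mul]
      have hsum0 : ∑ j ∈ J, W j * (glim y0 - glim (Z j)) = 0 := by
        simp only [mul_sub]
        rw [Finset.sum_sub_distrib, ← Finset.sum_mul, hWsum, one_mul, ← hgy0, sub_self]
      have hterm0 := (Finset.sum_eq_zero_iff_of_nonneg (fun j hj =>
        mul_nonneg (hWpos j hj) (sub_nonneg.mpr (hgmax _ (hCK (hZC j hj)))))).mp hsum0 j hj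
      rcases mul_eq_zero.mp hterm0 with hcon | hval
      · exact absurd hcon hWj
      · rw [hqeval, huφ j hj]
        linarith [hval]
    -- root set
    set Fr : Finset ℝ := ((J.filter (fun j => W j ≠ 0)).image uu).filter
      (fun x => x ≠ tmin) with hFr
    have hFrP : ∀ x ∈ Fr, x ∈ Set.Ioc tmin tmax ∧ q.eval x = 0 := by
      intro x hx
      rw [hFr, Finset.mem_filter, Finset.mem_image] at hx
      obtain ⟨⟨j, hj, rfl⟩, hne⟩ := hx
      rw [Finset.mem_filter] at hj
      have hIcc := huIcc j hj.1
      exact ⟨⟨lt_of_le_of_ne hIcc.1 (Ne.symm hne), hIcc.2⟩, hzero j hj.1 hj.2⟩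
    have hFrcard : Fr.card ≤ m :=
      aux_root_count m tmin tmax q hqne (by omega) hqpos Fr hFrP
    -- define nodes
    set lst : List ℝ := Fr.toList with hlst
    have hlen : lst.length ≤ m := by rw [hlst, Finset.length_toList]; exact hFrcard
    set tt : Fin ((N+2)/2) → ℝ :=
      fun k => if (k:ℕ) = 0 then tmin else lst.getD ((k:ℕ)-1) tmax with htt
    have hlstmem : ∀ x ∈ lst, x ∈ Set.Icc tmin tmax := by
      intro x hx
      rw [hlst, Finset.mem_toList] at hx
      exact Set.Ioc_subset_Icc_self (hFrP x hx).1
    have httIcc : ∀ k, tt k ∈ Set.Icc tmin tmax := by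
      intro k
      rw [htt]
      dsimp only
      split_ifs with hk
      · exact ⟨le_refl _, h.le⟩
      · by_cases hidx : (k:ℕ)-1 < lst.length
        · rw [List.getD_eq_getElem _ _ hidx]
          exact hlstmem _ (List.getElem_mem hidx)
        · rw [List.getD_eq_default _ _ (by omega)]
          exact ⟨h.le, le_refl _⟩
    have htt0 : ∀ hpf : 0 < (N+2)/2, tt ⟨0, hpf⟩ = tmin := by
      intro hpf
      simp [htt]
    have hex : ∀ j ∈ J, W j ≠ 0 → ∃ k : Fin ((N+2)/2), tt k = uu j := by
      intro j hj hWj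
      by_cases huj : uu j = tmin
      · exact ⟨⟨0, by omega⟩, by rw [htt0 (by omega)]; exact huj.symm⟩
      · have hmem : uu j ∈ Fr := by
          rw [hFr, Finset.mem_filter, Finset.mem_image]
          exact ⟨⟨j, Finset.mem_filter.mpr ⟨hj, hWj⟩, rfl⟩, huj⟩
        rw [← Finset.mem_toList, ← hlst, List.mem_iff_getElem] at hmem
        obtain ⟨nidx, hnlt, hnval⟩ := hmem
        refine ⟨⟨nidx + 1, by omega⟩, ?_⟩
        rw [htt]
        dsimp only
        rw [if_neg (by omega)]
        simpa using (List.getD_eq_getElem lst tmax (by omega : nidx + 1 - 1 < lst.length)).trans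
          (by simpa using hnval)
    set σf : ι → Fin ((N+2)/2) := fun j =>
      if hj : ∃ k : Fin ((N+2)/2), tt k = uu j then hj.choose else ⟨0, by omega⟩ with hσf
    have hσeq : ∀ j ∈ J, W j ≠ 0 → tt (σf j) = uu j := by
      intro j hj hWj
      have hjex := hex j hj hWj
      rw [hσf]
      dsimp only
      rw [dif_pos hjex]
      exact hjex.choose_spec
    set k0 : Fin ((N+2)/2) := ⟨0, by omega⟩ with hk0
    set c : Fin ((N+2)/2) → ℝ := fun k =>
      (if k = k0 then lam else 0) + (1-lam) * ∑ j ∈ J.filter (fun j => σf j = k), W j with hcd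
    have hvi : ∀ i : Fin N, lam * A i + (1 - lam) * y0 i = v i := by
      intro i
      have := congrFun hrepv i
      simpa [Pi.add_apply, Pi.smul_apply, smul_eq_mul] using this
    have hy0i : ∀ i : Fin N, y0 i = ∑ j ∈ J, W j * (uu j) ^ ((i:ℕ)+1) := by
      intro i
      conv_lhs => rw [← hcm2]
      rw [Finset.sum_apply]
      refine Finset.sum_congr rfl fun j hj => ?_
      rw [Pi.smul_apply, smul_eq_mul, ← huφ j hj]
    refine ⟨c, tt, ?_, ?_, httIcc, htt0 (by omega), ?_⟩
    · intro k
      rw [hcd]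
      dsimp only
      refine add_nonneg ?_ (mul_nonneg (by linarith) (Finset.sum_nonneg fun j hjf =>
        hWpos j (Finset.mem_filter.mp hjf).1))
      split_ifs <;> linarith
    · rw [Finset.sum_congr rfl (fun k _ => by rw [hcd]), Finset.sum_add_distrib,
        Finset.sum_ite_eq' Finset.univ k0 (fun _ => lam), ← Finset.mul_sum,
        Finset.sum_fiberwise_of_maps_to (fun j _ => Finset.mem_univ (σf j)) W, hWsum]
      simp
    · intro i
      have hexpand : ∀ k, c k * tt k ^ ((i:ℕ)+1) =
          (if k = k0 then lam * tmin ^ ((i:ℕ)+1) else 0) +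
          (1 - lam) * ∑ j ∈ J.filter (fun j => σf j = k), W j * (uu j) ^ ((i:ℕ)+1) := by
        intro k
        rw [hcd]
        dsimp only
        rw [add_mul, ite_mul, zero_mul]
        congr 1
        · split_ifs with hk
          · rw [hk, htt0 (by omega)]
          · rfl
        · rw [mul_assoc, Finset.sum_mul]
          congr 1
          refine Finset.sum_congr rfl fun j hjf => ?_
          obtain ⟨hjJ, hjσ⟩ := Finset.mem_filter.mp hjf
          rcases eq_or_ne (W j) 0 with hW0 | hW0
          · rw [hW0, zero_mul, zero_mul]
          · rw [← hjσ, hσeq j hjJ hW0]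
      rw [Finset.sum_congr rfl (fun k _ => hexpand k), Finset.sum_add_distrib,
        Finset.sum_ite_eq' Finset.univ k0 (fun _ => lam * tmin ^ ((i:ℕ)+1)), ← Finset.mul_sum,
        Finset.sum_fiberwise_of_maps_to (fun j _ => Finset.mem_univ (σf j))
          (fun j => W j * (uu j) ^ ((i:ℕ)+1)), ← hy0i i]
      simp only [Finset.mem_univ, if_true]
      have hAi : A i = tmin ^ ((i:ℕ)+1) := rfl
      rw [← hAi]
      exact hvi i
end

section
/- Let N be odd and let P : ℝ → ℝ^N be a curve each of whose N components is a polynomial of degree at most N, and restrict P to [t_min, t_max]. Then every point in the convex hull of the image of P can be written as a convex combination of at most (N+1)/2 points of the image of P. -/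
open Polynomial in
private lemma const_sign_of_even_mult (a b : ℝ) :
    ∀ (n : ℕ) (q : ℝ[X]), q.natDegree = n → q ≠ 0 →
      (∀ r ∈ Set.Ioo a b, Even (q.rootMultiplicity r)) →
      (∀ t ∈ Set.Icc a b, 0 ≤ q.eval t) ∨ (∀ t ∈ Set.Icc a b, q.eval t ≤ 0) := by
  intro n
  induction n using Nat.strong_induction_on with
  | _ n ih =>
    intro q hqn hq0 hmult
    by_contra hcon
    push_neg at hcon
    obtain ⟨⟨x, hx, hxneg⟩, ⟨y, hy, hypos⟩⟩ := hcon
    have hxy : x ≠ y := by intro hxy; rw [hxy] at hxneg; linarith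
    obtain ⟨z, hzab, hz0⟩ : ∃ z ∈ Set.Ioo a b, q.eval z = 0 := by
      rcases lt_or_gt_of_ne hxy with hlt | hlt
      · obtain ⟨z, hz, hz0⟩ := intermediate_value_Ioo hlt.le
          ((q.continuous_aeval).continuousOn (s := Set.Icc x y)) ⟨hxneg, hypos⟩
        exact ⟨z, ⟨lt_of_le_of_lt hx.1 hz.1, lt_of_lt_of_le hz.2 hy.2⟩, hz0⟩
      · obtain ⟨z, hz, hz0⟩ := intermediate_value_Ioo' hlt.le
          ((q.continuous_aeval).continuousOn (s := Set.Icc y x)) ⟨hxneg, hypos⟩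
        exact ⟨z, ⟨lt_of_le_of_lt hy.1 hz.1, lt_of_lt_of_le hz.2 hx.2⟩, hz0⟩
    set m := q.rootMultiplicity z with hm
    have hmeven : Even m := hmult z hzab
    have hmpos : 0 < m := (Polynomial.rootMultiplicity_pos hq0).mpr hz0
    set u := q /ₘ (X - C z) ^ m with hu
    have key : (X - C z) ^ m * u = q := q.pow_mul_divByMonic_rootMultiplicity_eq z
    have hu0 : u ≠ 0 := by
      intro h; rw [h, mul_zero] at key; exact hq0 key.symm
    have huz : u.eval z ≠ 0 := Polynomial.eval_divByMonic_pow_rootMultiplicity_ne_zero z hq0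
    have hpow0 : ((X - C z) ^ m : ℝ[X]) ≠ 0 := pow_ne_zero _ (Polynomial.X_sub_C_ne_zero z)
    have hdegu : u.natDegree < n := by
      have := Polynomial.natDegree_mul hpow0 hu0
      rw [key] at this
      rw [hqn] at this
      have hdp : ((X - C z) ^ m : ℝ[X]).natDegree = m := by
        simp [Polynomial.natDegree_pow]
      omega
    have hevalq : ∀ t : ℝ, q.eval t = (t - z) ^ m * u.eval t := by
      intro t; rw [← key]; simp
    have hxz : x ≠ z := by intro h; rw [h, hz0] at hxneg; linarith
    have hyz : y ≠ z := by intro h; rw [h, hz0] at hypos; linarith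
    have hxpow : 0 < (x - z) ^ m := hmeven.pow_pos (sub_ne_zero.mpr hxz)
    have hypow : 0 < (y - z) ^ m := hmeven.pow_pos (sub_ne_zero.mpr hyz)
    have hxu : u.eval x < 0 := by
      have := hevalq x; nlinarith
    have hyu : 0 < u.eval y := by
      have := hevalq y; nlinarith
    have hmultu : ∀ r ∈ Set.Ioo a b, Even (u.rootMultiplicity r) := by
      intro r hr
      have hsplit : q.rootMultiplicity r
          = Polynomial.rootMultiplicity r ((X - C z) ^ m) + u.rootMultiplicity r := by
        rw [← key] at hq0 ⊢
        exact Polynomial.rootMultiplicity_mul hq0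
      by_cases hrz : r = z
      · subst hrz
        have : u.rootMultiplicity r = 0 := Polynomial.rootMultiplicity_eq_zero huz
        simp [this]
      · have hpr : ¬ Polynomial.IsRoot ((X - C z) ^ m) r := by
          simp only [Polynomial.IsRoot, Polynomial.eval_pow, Polynomial.eval_sub,
            Polynomial.eval_X, Polynomial.eval_C]
          exact pow_ne_zero _ (sub_ne_zero.mpr hrz)
        have h0 : Polynomial.rootMultiplicity r ((X - C z) ^ m) = 0 :=
          Polynomial.rootMultiplicity_eq_zero hpr
        have := hmult r hr
        rw [hsplit, h0, zero_add] at this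
        exact this
    rcases ih u.natDegree hdegu u rfl hu0 hmultu with hpos | hneg
    · have := hpos x hx; linarith
    · have := hneg y hy; linarith


open Polynomial Finset in
private lemma L_sub (S : Finset ℝ) (W : ℝ → ℝ) (f g : ℝ[X]) :
    ∑ x ∈ S, W x * (f - g).eval x
      = (∑ x ∈ S, W x * f.eval x) - ∑ x ∈ S, W x * g.eval x := by
  rw [← Finset.sum_sub_distrib]
  exact Finset.sum_congr rfl fun x _ => by simp [mul_sub]

open Polynomial Finset in
private lemma L_mul_expand (S : Finset ℝ) (W : ℝ → ℝ) (f g : ℝ[X]) (n : ℕ)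
    (hg : g.natDegree < n) :
    ∑ x ∈ S, W x * (f * g).eval x
      = ∑ i ∈ Finset.range n, g.coeff i * ∑ x ∈ S, W x * (f * X ^ i).eval x := by
  conv_lhs => rw [Polynomial.as_sum_range' g n hg]
  simp only [Polynomial.eval_mul, Polynomial.eval_finset_sum, Polynomial.eval_monomial,
    Finset.mul_sum, Finset.sum_mul, Polynomial.eval_pow, Polynomial.eval_X]
  rw [Finset.sum_comm]
  exact Finset.sum_congr rfl fun i _ => Finset.sum_congr rfl fun x _ => by ring

/-- padding representation lemma -/
private lemma pad_repr : ∀ (k : ℕ) (S : Finset ℝ), S.card ≤ k → ∀ (c : ℝ → ℝ) (d : ℝ),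
    ∃ c' t : Fin k → ℝ,
      (∀ j, (c' j = 0 ∧ t j = d) ∨ (t j ∈ S ∧ c' j = c (t j))) ∧
      ∀ F : ℝ → ℝ, ∑ j, c' j * F (t j) = ∑ x ∈ S, c x * F x := by
  intro k
  induction k with
  | zero =>
    intro S hS c d
    have : S = ∅ := Finset.card_eq_zero.mp (Nat.le_zero.mp hS)
    subst this
    exact ⟨Fin.elim0, Fin.elim0, fun j => j.elim0, fun F => by simp⟩
  | succ k ih =>
    intro S hS c d
    rcases S.eq_empty_or_nonempty with rfl | ⟨x₀, hx₀⟩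
    · refine ⟨fun _ => 0, fun _ => d, fun j => Or.inl ⟨rfl, rfl⟩, fun F => by simp⟩
    · obtain ⟨c', t, hprop, hsum⟩ := ih (S.erase x₀)
        (by rw [Finset.card_erase_of_mem hx₀]; omega) c d
      refine ⟨Fin.cons (c x₀) c', Fin.cons x₀ t, ?_, ?_⟩
      · intro j
        refine Fin.cases ?_ ?_ j
        · exact Or.inr ⟨hx₀, by simp⟩
        · intro i
          rcases hprop i with ⟨h1, h2⟩ | ⟨h1, h2⟩
          · exact Or.inl ⟨by simpa using h1, by simpa using h2⟩
          · exact Or.inr ⟨Finset.mem_of_mem_erase (by simpa using h1), by simpa using h2⟩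
      · intro F
        rw [Fin.sum_univ_succ]
        simp only [Fin.cons_zero, Fin.cons_succ]
        rw [hsum F]; exact Finset.add_sum_erase _ (fun x => c x * F x) hx₀



open Polynomial Finset in
private lemma gauss_exists_pi (k : ℕ) (hk : 1 ≤ k) (S : Finset ℝ) (hcard : k + 1 ≤ S.card)
    (W : ℝ → ℝ) (hW : ∀ x ∈ S, 0 < W x) :
    ∃ π : ℝ[X], π.Monic ∧ π.natDegree = k ∧
      ∀ g : ℝ[X], g.natDegree < k → ∑ x ∈ S, W x * (π * g).eval x = 0 := by
  classical
  set G : Matrix (Fin k) (Fin k) ℝ :=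
    fun i j => ∑ x ∈ S, W x * x ^ ((i : ℕ) + (j : ℕ)) with hG
  have hinj : Function.Injective G.mulVecLin := by
    rw [← LinearMap.ker_eq_bot, LinearMap.ker_eq_bot']
    intro c hc
    set q : ℝ[X] := ∑ j : Fin k, C (c j) * X ^ (j : ℕ) with hq
    have hqdeg : q.natDegree < k := by
      have : q.natDegree ≤ k - 1 := by
        apply Polynomial.natDegree_sum_le_of_forall_le
        intro j _
        refine le_trans (Polynomial.natDegree_C_mul_le _ _) ?_
        rw [Polynomial.natDegree_X_pow]
        omega
      omega
    have hqeval : ∀ τ : ℝ, q.eval τ = ∑ j : Fin k, c j * τ ^ (j : ℕ) := by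
      intro τ; simp [hq, Polynomial.eval_finset_sum]
    have hrow : ∀ i : Fin k, ∑ x ∈ S, W x * x ^ (i : ℕ) * q.eval x = 0 := by
      intro i
      have hrow0 : ∑ j : Fin k, (∑ x ∈ S, W x * x ^ ((i : ℕ) + (j : ℕ))) * c j = 0 := by
        have := congrFun hc i; rw [Matrix.mulVecLin_apply] at this
        simpa [Matrix.mulVecLin_apply, Matrix.mulVec, dotProduct, hG] using this
      calc ∑ x ∈ S, W x * x ^ (i : ℕ) * q.eval x
          = ∑ j : Fin k, (∑ x ∈ S, W x * x ^ ((i : ℕ) + (j : ℕ))) * c j := by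
            simp only [hqeval, Finset.mul_sum]
            rw [Finset.sum_comm]
            refine Finset.sum_congr rfl fun j _ => ?_
            rw [Finset.sum_mul]
            refine Finset.sum_congr rfl fun x _ => by rw [pow_add]; ring
        _ = 0 := hrow0
    have hsq : ∑ x ∈ S, W x * q.eval x ^ 2 = 0 := by
      have h0 : ∑ i : Fin k, c i * (∑ x ∈ S, W x * x ^ (i : ℕ) * q.eval x) = 0 := by
        simp [hrow]
      rw [← h0]
      simp only [Finset.mul_sum]
      rw [Finset.sum_comm]
      refine Finset.sum_congr rfl fun x _ => ?_
      have : ∑ i : Fin k, c i * (W x * x ^ (i : ℕ) * q.eval x)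
          = W x * q.eval x * ∑ i : Fin k, c i * x ^ (i : ℕ) :=
        by rw [Finset.mul_sum]; exact Finset.sum_congr rfl fun i _ => by ring
      rw [this, ← hqeval x]; ring
    have heval0 : ∀ x ∈ S, q.eval x = 0 := by
      intro x hx
      have hall : ∀ y ∈ S, 0 ≤ W y * q.eval y ^ 2 :=
        fun y hy => mul_nonneg (hW y hy).le (sq_nonneg _)
      have h2 := (Finset.sum_eq_zero_iff_of_nonneg hall).mp hsq x hx
      rcases mul_eq_zero.mp h2 with h | h
      · exact absurd h (ne_of_gt (hW x hx))
      · exact pow_eq_zero_iff two_ne_zero |>.mp h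
    have hq0 : q = 0 := by
      apply Polynomial.eq_zero_of_natDegree_lt_card_of_eval_eq_zero' q S heval0
      omega
    funext j
    have hcoeff : q.coeff (j : ℕ) = c j := by
      rw [hq, Polynomial.finset_sum_coeff, Finset.sum_eq_single j]
      · simp
      · intro b _ hbj
        simp only [Polynomial.coeff_C_mul, Polynomial.coeff_X_pow]
        rw [if_neg (by exact fun h => hbj (Fin.ext h.symm))]
        ring
      · simp
    rw [hq0] at hcoeff
    simpa using hcoeff.symm
  have hsurj : Function.Surjective G.mulVecLin :=
    (LinearMap.injective_iff_surjective).mp hinj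
  obtain ⟨cc, hcc⟩ := hsurj (fun i => -(∑ x ∈ S, W x * x ^ (k + (i : ℕ))))
  set π : ℝ[X] := X ^ k + ∑ j : Fin k, C (cc j) * X ^ (j : ℕ) with hπ
  have hsumdeg : (∑ j : Fin k, C (cc j) * X ^ (j : ℕ) : ℝ[X]).degree < (k : ℕ) := by
    refine lt_of_le_of_lt (Polynomial.degree_le_natDegree) ?_
    rw [Nat.cast_lt]
    have : (∑ j : Fin k, C (cc j) * X ^ (j : ℕ) : ℝ[X]).natDegree ≤ k - 1 := by
      apply Polynomial.natDegree_sum_le_of_forall_le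
      intro j _
      refine le_trans (Polynomial.natDegree_C_mul_le _ _) ?_
      rw [Polynomial.natDegree_X_pow]; omega
    omega
  have hmonic : π.Monic := Polynomial.monic_X_pow_add hsumdeg
  have hπdeg : π.natDegree = k := by
    have hd : π.degree = (k : ℕ) := by
      rw [hπ, Polynomial.degree_add_eq_left_of_degree_lt]
      · exact Polynomial.degree_X_pow k
      · rw [Polynomial.degree_X_pow]; exact hsumdeg
    exact Polynomial.natDegree_eq_of_degree_eq_some hd
  refine ⟨π, hmonic, hπdeg, ?_⟩
  have horth0 : ∀ i : Fin k, ∑ x ∈ S, W x * (π * X ^ (i : ℕ)).eval x = 0 := by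
    intro i
    have hvec : ∑ j : Fin k, (∑ x ∈ S, W x * x ^ ((i : ℕ) + (j : ℕ))) * cc j
        = -(∑ x ∈ S, W x * x ^ (k + (i : ℕ))) := by
      have := congrFun hcc i; rw [Matrix.mulVecLin_apply] at this
      simpa [Matrix.mulVecLin_apply, Matrix.mulVec, dotProduct, hG] using this
    calc ∑ x ∈ S, W x * (π * X ^ (i : ℕ)).eval x
        = ∑ x ∈ S, (W x * x ^ (k + (i : ℕ))
            + ∑ j : Fin k, (W x * x ^ ((i : ℕ) + (j : ℕ))) * cc j) := by
          refine Finset.sum_congr rfl fun x _ => ?_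
          simp only [hπ, Polynomial.eval_mul, Polynomial.eval_add, Polynomial.eval_pow,
            Polynomial.eval_X, Polynomial.eval_finset_sum, Polynomial.eval_C]
          rw [add_mul, mul_add]
          congr 1
          · rw [pow_add]
          · rw [Finset.sum_mul, Finset.mul_sum]
            exact Finset.sum_congr rfl fun j _ => by rw [pow_add]; ring
      _ = (∑ x ∈ S, W x * x ^ (k + (i : ℕ)))
            + ∑ x ∈ S, ∑ j : Fin k, (W x * x ^ ((i : ℕ) + (j : ℕ))) * cc j :=
          Finset.sum_add_distrib
      _ = (∑ x ∈ S, W x * x ^ (k + (i : ℕ)))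
            + ∑ j : Fin k, (∑ x ∈ S, W x * x ^ ((i : ℕ) + (j : ℕ))) * cc j := by
          congr 1
          rw [Finset.sum_comm]
          exact Finset.sum_congr rfl fun j _ => (Finset.sum_mul _ _ _).symm
      _ = 0 := by rw [hvec]; ring
  intro g hg
  rw [L_mul_expand S W π g k hg]
  refine Finset.sum_eq_zero fun i hi => ?_
  rw [Finset.mem_range] at hi
  have := horth0 ⟨i, hi⟩
  simp only at this
  rw [this, mul_zero]



open Polynomial Finset in
private lemma gauss_nodes (k : ℕ) (a b : ℝ) (S : Finset ℝ)
    (hSab : ∀ x ∈ S, x ∈ Set.Icc a b) (hcard : k + 1 ≤ S.card)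
    (W : ℝ → ℝ) (hW : ∀ x ∈ S, 0 < W x) (π : ℝ[X]) (hmonic : π.Monic)
    (hπdeg : π.natDegree = k)
    (horth : ∀ g : ℝ[X], g.natDegree < k → ∑ x ∈ S, W x * (π * g).eval x = 0) :
    ∃ R : Finset ℝ, R.card = k ∧ (∀ r ∈ R, r ∈ Set.Ioo a b) ∧
      π = ∏ r ∈ R, (X - C r) := by
  classical
  have hπ0 : π ≠ 0 := hmonic.ne_zero
  set R0 : Finset ℝ := π.roots.toFinset.filter
    (fun r => r ∈ Set.Ioo a b ∧ Odd (π.rootMultiplicity r)) with hR0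
  set g0 : ℝ[X] := ∏ r ∈ R0, (X - C r) with hg0
  have hg0monic : g0.Monic := monic_prod_of_monic _ _ fun r _ => monic_X_sub_C r
  have hg00 : g0 ≠ 0 := hg0monic.ne_zero
  have hM0 : π * g0 ≠ 0 := mul_ne_zero hπ0 hg00
  have hrmg0 : ∀ r : ℝ, g0.rootMultiplicity r = if r ∈ R0 then 1 else 0 := by
    intro r
    rw [← Polynomial.count_roots, hg0, Polynomial.roots_prod_X_sub_C]
    by_cases hr : r ∈ R0
    · rw [if_pos hr]
      exact Multiset.count_eq_one_of_mem R0.nodup hr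
    · rw [if_neg hr]
      exact Multiset.count_eq_zero_of_notMem hr
  have hmultM : ∀ r ∈ Set.Ioo a b, Even ((π * g0).rootMultiplicity r) := by
    intro r hr
    rw [Polynomial.rootMultiplicity_mul hM0, hrmg0 r]
    by_cases hrR : r ∈ R0
    · rw [if_pos hrR]
      have hodd : Odd (π.rootMultiplicity r) := (Finset.mem_filter.mp hrR).2.2
      exact hodd.add_one
    · rw [if_neg hrR, add_zero]
      by_contra heven
      have hodd : Odd (π.rootMultiplicity r) := Nat.not_even_iff_odd.mp heven
      have hpos : 0 < π.rootMultiplicity r := hodd.pos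
      have hroot : Polynomial.IsRoot π r := (Polynomial.rootMultiplicity_pos hπ0).mp hpos
      have : r ∈ R0 := by
        rw [hR0, Finset.mem_filter, Multiset.mem_toFinset]
        exact ⟨(Polynomial.mem_roots hπ0).mpr hroot, hr, hodd⟩
      exact hrR this
  have hRk : k ≤ R0.card := by
    by_contra hlt
    push_neg at hlt
    have hdeg_g0 : g0.natDegree = R0.card := by
      rw [hg0, Polynomial.natDegree_prod _ _ fun r _ => Polynomial.X_sub_C_ne_zero r]
      simp [Polynomial.natDegree_X_sub_C]
    have horthg0 : ∑ x ∈ S, W x * (π * g0).eval x = 0 :=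
      horth g0 (by rw [hdeg_g0]; exact hlt)
    have hsubroots : ¬ (S ⊆ π.roots.toFinset) := by
      intro hsub
      have h1 : S.card ≤ π.roots.toFinset.card := Finset.card_le_card hsub
      have h2 : π.roots.toFinset.card ≤ Multiset.card π.roots := Multiset.toFinset_card_le _
      have h3 : Multiset.card π.roots ≤ π.natDegree := Polynomial.card_roots' π
      omega
    obtain ⟨x₀, hx₀S, hx₀not⟩ := Finset.not_subset.mp hsubroots
    have hπx₀ : π.eval x₀ ≠ 0 := by
      intro h
      exact hx₀not (Multiset.mem_toFinset.mpr ((Polynomial.mem_roots hπ0).mpr h))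
    have hg0x₀ : g0.eval x₀ ≠ 0 := by
      rw [hg0, Polynomial.eval_prod]
      refine Finset.prod_ne_zero_iff.mpr fun r hrR => ?_
      simp only [Polynomial.eval_sub, Polynomial.eval_X, Polynomial.eval_C, sub_ne_zero]
      intro hx₀r
      exact hx₀not (Finset.mem_of_mem_filter _ (hx₀r ▸ hrR))
    have hMx₀ : (π * g0).eval x₀ ≠ 0 := by
      rw [Polynomial.eval_mul]; exact mul_ne_zero hπx₀ hg0x₀
    rcases const_sign_of_even_mult a b (π * g0).natDegree (π * g0) rfl hM0 hmultM with hpos | hneg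
    · have : 0 < ∑ x ∈ S, W x * (π * g0).eval x := by
        refine Finset.sum_pos' (fun x hx => mul_nonneg (hW x hx).le (hpos x (hSab x hx)))
          ⟨x₀, hx₀S, mul_pos (hW x₀ hx₀S)
            (lt_of_le_of_ne (hpos x₀ (hSab x₀ hx₀S)) (Ne.symm hMx₀))⟩
      rw [horthg0] at this; exact lt_irrefl 0 this
    · have : 0 < ∑ x ∈ S, -(W x * (π * g0).eval x) := by
        refine Finset.sum_pos' (fun x hx => ?_) ⟨x₀, hx₀S, ?_⟩
        · have := hneg x (hSab x hx)
          have := (hW x hx).le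
          nlinarith
        · have h1 := hneg x₀ (hSab x₀ hx₀S)
          have h2 := hW x₀ hx₀S
          have h3 : (π * g0).eval x₀ < 0 := lt_of_le_of_ne h1 hMx₀
          nlinarith
      rw [Finset.sum_neg_distrib, horthg0] at this
      simp at this
  -- now R0 has exactly k elements and π factors
  have hchain1 : R0.card ≤ π.roots.toFinset.card :=
    Finset.card_le_card (Finset.filter_subset _ _)
  have hchain2 : π.roots.toFinset.card ≤ Multiset.card π.roots := Multiset.toFinset_card_le _
  have hchain3 : Multiset.card π.roots ≤ π.natDegree := Polynomial.card_roots' π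
  have hR0card : R0.card = k := le_antisymm (by omega) hRk
  have hrootscard : Multiset.card π.roots = π.natDegree := by omega
  have hnodup : π.roots.Nodup := by
    rw [← Multiset.toFinset_card_eq_card_iff_nodup]
    omega
  have hR0eq : R0 = π.roots.toFinset :=
    Finset.eq_of_subset_of_card_le (Finset.filter_subset _ _) (by omega)
  have hfact := Polynomial.prod_multiset_X_sub_C_of_monic_of_roots_card_eq hmonic hrootscard
  refine ⟨R0, hR0card, fun r hr => (Finset.mem_filter.mp hr).2.1, ?_⟩
  rw [Finset.prod_eq_multiset_prod, hR0eq]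
  have hval : π.roots.toFinset.val = π.roots := by
    rw [Multiset.toFinset_val]
    exact Multiset.dedup_eq_self.mpr hnodup
  rw [hval, hfact]



open Polynomial Finset in
private lemma gauss_quadrature (k : ℕ) (hk : 1 ≤ k) (a b : ℝ) (S : Finset ℝ)
    (hSab : ∀ x ∈ S, x ∈ Set.Icc a b) (hcard : k + 1 ≤ S.card)
    (W : ℝ → ℝ) (hW : ∀ x ∈ S, 0 < W x) (π : ℝ[X]) (hmonic : π.Monic)
    (hπdeg : π.natDegree = k)
    (horth : ∀ g : ℝ[X], g.natDegree < k → ∑ x ∈ S, W x * (π * g).eval x = 0)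
    (R : Finset ℝ) (hRcard : R.card = k) (hRab : ∀ r ∈ R, r ∈ Set.Ioo a b)
    (hπfact : π = ∏ r ∈ R, (X - C r)) :
    ∃ c : ℝ → ℝ, (∀ r ∈ R, 0 ≤ c r) ∧
      ∀ q : ℝ[X], q.natDegree ≤ 2 * k - 1 →
        ∑ r ∈ R, c r * q.eval r = ∑ x ∈ S, W x * q.eval x := by
  classical
  have hπ0 : π ≠ 0 := hmonic.ne_zero
  have hinj : Set.InjOn (id : ℝ → ℝ) R := Set.injOn_id _
  set c : ℝ → ℝ := fun r => ∑ x ∈ S, W x * ((Lagrange.basis R id r) ^ 2).eval x with hc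
  have hcnonneg : ∀ r ∈ R, 0 ≤ c r := by
    intro r _
    refine Finset.sum_nonneg fun x hx => mul_nonneg (hW x hx).le ?_
    rw [Polynomial.eval_pow]
    exact sq_nonneg _
  have hLbasis : ∀ r ∈ R,
      ∑ x ∈ S, W x * (Lagrange.basis R id r).eval x = c r := by
    intro r hr
    set B : ℝ[X] := Lagrange.basis R id r with hB
    have hdegB : B.natDegree = k - 1 := by
      rw [hB, Lagrange.natDegree_basis hinj hr, hRcard]
    set d : ℝ[X] := B ^ 2 - B with hd
    have hvanish : ∀ y ∈ R, d.eval y = 0 := by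
      intro y hy
      rw [hd]
      simp only [Polynomial.eval_sub, Polynomial.eval_pow]
      by_cases hyr : y = r
      · subst hyr
        have : B.eval (id y) = 1 := Lagrange.eval_basis_self hinj hy
        simp only [id] at this
        rw [this]; norm_num
      · have : B.eval (id y) = 0 := Lagrange.eval_basis_of_ne (Ne.symm hyr) hy
        simp only [id] at this
        rw [this]; norm_num
    have hdvd : π ∣ d := by
      rw [hπfact]
      refine Finset.prod_dvd_of_coprime ?_ fun y hy => ?_
      · have hpair := Polynomial.pairwise_coprime_X_sub_C
          (Function.injective_id : Function.Injective (id : ℝ → ℝ))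
        exact fun y _ y' _ hyy' => hpair hyy'
      · exact Polynomial.dvd_iff_isRoot.mpr (hvanish y hy)
    have hLd : ∑ x ∈ S, W x * d.eval x = 0 := by
      by_cases hd0 : d = 0
      · simp [hd0]
      · obtain ⟨h', hh'⟩ := hdvd
        have hh'0 : h' ≠ 0 := by
          intro h; rw [h, mul_zero] at hh'; exact hd0 hh'
        have hnd_d : d.natDegree = k + h'.natDegree := by
          rw [hh', Polynomial.natDegree_mul hπ0 hh'0, hπdeg]
        have hnd_d_le : d.natDegree ≤ 2 * k - 2 := by
          refine le_trans (Polynomial.natDegree_sub_le _ _) ?_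
          rw [Polynomial.natDegree_pow, hdegB]
          omega
        have hh'deg : h'.natDegree < k := by omega
        rw [hh']
        exact horth h' hh'deg
    have hsub := L_sub S W (B ^ 2) B
    rw [← hd] at hsub
    rw [hLd] at hsub
    have : ∑ x ∈ S, W x * (B ^ 2).eval x = c r := rfl
    linarith [hsub, this]
  refine ⟨c, hcnonneg, ?_⟩
  intro q hq
  set r0 : ℝ[X] := q %ₘ π with hr0
  have hsplit : r0 + π * (q /ₘ π) = q := q.modByMonic_add_div π
  have hdivdeg : (q /ₘ π).natDegree < k := by
    rw [Polynomial.natDegree_divByMonic q hmonic, hπdeg]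
    omega
  have hLq : ∑ x ∈ S, W x * q.eval x = ∑ x ∈ S, W x * r0.eval x := by
    have h1 : ∑ x ∈ S, W x * q.eval x
        = ∑ x ∈ S, W x * r0.eval x + ∑ x ∈ S, W x * (π * (q /ₘ π)).eval x := by
      rw [← Finset.sum_add_distrib]
      refine Finset.sum_congr rfl fun x _ => ?_
      conv_lhs => rw [← hsplit]
      simp [mul_add]
    rw [h1, horth _ hdivdeg, add_zero]
  have hdeg_r0 : r0.degree < (R.card : WithBot ℕ) := by
    have h := Polynomial.degree_modByMonic_lt q hmonic
    rw [Polynomial.degree_eq_natDegree hπ0, hπdeg] at h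
    rw [hRcard]
    exact h
  have hinterp : r0 = ∑ y ∈ R, C (r0.eval y) * Lagrange.basis R id y := by
    have h := Lagrange.eq_interpolate (s := R) (v := id) (f := r0) hinj (by exact_mod_cast hdeg_r0)
    rw [Lagrange.interpolate_apply] at h
    simpa using h
  have hLr0 : ∑ x ∈ S, W x * r0.eval x = ∑ y ∈ R, r0.eval y * c y := by
    conv_lhs => rw [hinterp]
    simp only [Polynomial.eval_finset_sum, Polynomial.eval_mul, Polynomial.eval_C,
      Finset.mul_sum]
    rw [Finset.sum_comm]
    refine Finset.sum_congr rfl fun y hy => ?_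
    rw [← hLbasis y hy, Finset.mul_sum]
    exact Finset.sum_congr rfl fun x _ => by ring
  have heq : ∀ y ∈ R, q.eval y = r0.eval y := by
    intro y hy
    have hπy : π.eval y = 0 := by
      rw [hπfact, Polynomial.eval_prod]
      exact Finset.prod_eq_zero hy (by simp)
    conv_lhs => rw [← hsplit]
    simp [hπy]
  calc ∑ r ∈ R, c r * q.eval r
      = ∑ r ∈ R, r0.eval r * c r :=
        Finset.sum_congr rfl fun r hr => by rw [heq r hr]; ring
    _ = ∑ x ∈ S, W x * r0.eval x := hLr0.symm
    _ = ∑ x ∈ S, W x * q.eval x := hLq.symm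






open Polynomial Finset in
private lemma quad_main (k : ℕ) (hk : 1 ≤ k) (a b : ℝ) (hab : a < b) (S : Finset ℝ)
    (hSab : ∀ x ∈ S, x ∈ Set.Icc a b) (W : ℝ → ℝ) (hW : ∀ x ∈ S, 0 < W x) :
    ∃ c t : Fin k → ℝ, (∀ j, 0 ≤ c j) ∧ (∀ j, t j ∈ Set.Icc a b) ∧
      ∀ q : ℝ[X], q.natDegree ≤ 2 * k - 1 →
        ∑ j, c j * q.eval (t j) = ∑ x ∈ S, W x * q.eval x := by
  classical
  have haIcc : a ∈ Set.Icc a b := Set.left_mem_Icc.mpr hab.le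
  by_cases hbig : k + 1 ≤ S.card
  · obtain ⟨π, hmonic, hπdeg, horth⟩ := gauss_exists_pi k hk S hbig W hW
    obtain ⟨R, hRcard, hRab, hπfact⟩ :=
      gauss_nodes k a b S hSab hbig W hW π hmonic hπdeg horth
    obtain ⟨c, hcnonneg, hexact⟩ :=
      gauss_quadrature k hk a b S hSab hbig W hW π hmonic hπdeg horth R hRcard hRab hπfact
    obtain ⟨c', t, hprop, hsum⟩ := pad_repr k R (le_of_eq hRcard) c a
    refine ⟨c', t, ?_, ?_, ?_⟩
    · intro j
      rcases hprop j with ⟨h1, _⟩ | ⟨h1, h2⟩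
      · rw [h1]
      · rw [h2]; exact hcnonneg _ h1
    · intro j
      rcases hprop j with ⟨_, h2⟩ | ⟨h1, _⟩
      · rw [h2]; exact haIcc
      · exact Set.Ioo_subset_Icc_self (hRab _ h1)
    · intro q hq
      rw [hsum (fun x => q.eval x)]
      exact hexact q hq
  · push_neg at hbig
    obtain ⟨c', t, hprop, hsum⟩ := pad_repr k S (by omega) W a
    refine ⟨c', t, ?_, ?_, ?_⟩
    · intro j
      rcases hprop j with ⟨h1, _⟩ | ⟨h1, h2⟩
      · rw [h1]
      · rw [h2]; exact (hW _ h1).le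
    · intro j
      rcases hprop j with ⟨_, h2⟩ | ⟨h1, _⟩
      · rw [h2]; exact haIcc
      · exact hSab _ h1
    · intro q _
      exact hsum (fun x => q.eval x)

/-- For odd `N` and a curve `P` whose `N` components are polynomials of degree at
most `N`, restricted to `[t_min, t_max]`, every point of the convex hull of the
image of `P` is a convex combination of at most `(N+1)/2` points of the image. -/
theorem convexHull_polynomialCurve_odd (N : ℕ) (hN : Odd N) (tmin tmax : ℝ)
    (h : tmin < tmax) (p : Fin N → Polynomial ℝ) (hdeg : ∀ i, (p i).natDegree ≤ N)
    (v : Fin N → ℝ)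
    (hv : v ∈ convexHull ℝ ((fun t : ℝ => fun i : Fin N => (p i).eval t) ''
      Set.Icc tmin tmax)) :
    ∃ c t : Fin ((N + 1) / 2) → ℝ,
      (∀ j, 0 ≤ c j) ∧ (∑ j, c j = 1) ∧ (∀ j, t j ∈ Set.Icc tmin tmax) ∧
      (∀ i : Fin N, ∑ j, c j * (p i).eval (t j) = v i) := by
  classical
  obtain ⟨m, hm⟩ := hN
  have hk1 : 1 ≤ (N + 1) / 2 := by omega
  have hN2k : N = 2 * ((N + 1) / 2) - 1 := by omega
  rw [convexHull_eq] at hv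
  obtain ⟨ι, F, w, z, hw0, hw1, hzs, hcm⟩ := hv
  simp only [Set.mem_image] at hzs
  choose! s hsmem hseq using hzs
  have hveq : ∀ i : Fin N, v i = ∑ x ∈ F, w x * (p i).eval (s x) := by
    intro i
    have h0 : (∑ x ∈ F, w x • z x) = v := by
      rw [← Finset.centerMass_eq_of_sum_1 _ _ hw1, hcm]
    have h1 := congrFun h0 i
    rw [← h1, Finset.sum_apply]
    refine Finset.sum_congr rfl fun x hx => ?_
    rw [Pi.smul_apply, smul_eq_mul]
    congr 1
    rw [← hseq x hx]
  set S0 : Finset ℝ := F.image s with hS0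
  set WW : ℝ → ℝ := fun τ => ∑ x ∈ F.filter (fun i => s i = τ), w x with hWW
  have hfiber : ∀ g : ℝ → ℝ, ∑ τ ∈ S0, WW τ * g τ = ∑ x ∈ F, w x * g (s x) := by
    intro g
    rw [← Finset.sum_fiberwise_of_maps_to (fun x hx => Finset.mem_image_of_mem s hx)
      (fun x => w x * g (s x))]
    refine Finset.sum_congr rfl fun τ hτ => ?_
    rw [hWW, Finset.sum_mul]
    refine Finset.sum_congr rfl fun x hx => ?_
    rw [(Finset.mem_filter.mp hx).2]
  have hWWnonneg : ∀ τ, 0 ≤ WW τ :=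
    fun τ => Finset.sum_nonneg fun x hx => hw0 x (Finset.mem_filter.mp hx).1
  set S : Finset ℝ := S0.filter (fun τ => 0 < WW τ) with hS
  have hfilter : ∀ g : ℝ → ℝ, ∑ τ ∈ S, WW τ * g τ = ∑ τ ∈ S0, WW τ * g τ := by
    intro g
    rw [hS]
    refine Finset.sum_filter_of_ne fun τ _ hne => ?_
    exact lt_of_le_of_ne (hWWnonneg τ) (Ne.symm (left_ne_zero_of_mul hne))
  have hSab : ∀ τ ∈ S, τ ∈ Set.Icc tmin tmax := by
    intro τ hτ
    obtain ⟨x, hx, rfl⟩ := Finset.mem_image.mp (Finset.mem_filter.mp hτ).1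
    exact hsmem x hx
  have hWpos : ∀ τ ∈ S, 0 < WW τ := fun τ hτ => (Finset.mem_filter.mp hτ).2
  obtain ⟨c, t, hc0, htIcc, hexact⟩ :=
    quad_main ((N + 1) / 2) hk1 tmin tmax h S hSab WW hWpos
  have hkey : ∀ q : Polynomial ℝ, q.natDegree ≤ N →
      ∑ j, c j * q.eval (t j) = ∑ x ∈ F, w x * q.eval (s x) := by
    intro q hq
    rw [hexact q (by omega : q.natDegree ≤ 2 * ((N + 1) / 2) - 1)]
    rw [hfilter (fun τ => q.eval τ), hfiber (fun τ => q.eval τ)]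
  have hsum1 : ∑ j, c j = 1 := by
    have h1 := hkey 1 (by simp)
    simp only [Polynomial.eval_one, mul_one] at h1
    rw [h1, hw1]
  refine ⟨c, t, hc0, hsum1, htIcc, ?_⟩
  intro i
  rw [hkey (p i) (hdeg i), ← hveq i]
end

section
/- Let N be odd, t_min < t_max, M₁, M₂ ≤ (N+1)/2 positive integers. Suppose Σ_{j=1}^{M₁} c_j · (1, t_j, ..., t_j^N) = Σ_{j=1}^{M₂} c'_j · (1, t'_j, ..., t'_j^N), where for each naming: all coefficients are strictly positive, the parameters lie in [t_min, t_max] and are strictly increasing. Then M₁ = M₂, and c_j = c'_j, t_j = t'_j for all j. -/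
/-- Uniqueness of non-reducible namings for odd `N`: two convex combinations of
points on the moment curve with strictly positive coefficients and strictly
increasing parameters, each with at most `(N+1)/2` terms, that agree on all
moments `(1, t, …, t^N)`, coincide term by term. -/
theorem nonreducible_naming_unique_odd (N : ℕ) (hN : Odd N) (tmin tmax : ℝ)
    (h : tmin < tmax) (M₁ M₂ : ℕ) (h1 : 0 < M₁) (h2 : 0 < M₂)
    (hM1 : M₁ ≤ (N + 1) / 2) (hM2 : M₂ ≤ (N + 1) / 2)
    (c t : Fin M₁ → ℝ) (c' t' : Fin M₂ → ℝ)
    (hc : ∀ j, 0 < c j) (hc' : ∀ j, 0 < c' j)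
    (ht : ∀ j, t j ∈ Set.Icc tmin tmax) (ht' : ∀ j, t' j ∈ Set.Icc tmin tmax)
    (hst : StrictMono t) (hst' : StrictMono t')
    (heq : ∀ i : Fin (N + 1), ∑ j, c j * t j ^ (i : ℕ) = ∑ j, c' j * t' j ^ (i : ℕ)) :
    ∃ hM : M₁ = M₂, ∀ j : Fin M₁, c j = c' (Fin.cast hM j) ∧ t j = t' (Fin.cast hM j) := by
  classical
  obtain ⟨k, hk⟩ := hN
  set S : Finset ℝ := Finset.image t Finset.univ ∪ Finset.image t' Finset.univ with hSdef
  have htS : ∀ j, t j ∈ S := fun j =>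
    Finset.mem_union_left _ (Finset.mem_image_of_mem _ (Finset.mem_univ j))
  have ht'S : ∀ j, t' j ∈ S := fun j =>
    Finset.mem_union_right _ (Finset.mem_image_of_mem _ (Finset.mem_univ j))
  have hcard : S.card ≤ N + 1 := by
    have hu : S.card ≤ (Finset.image t Finset.univ).card + (Finset.image t' Finset.univ).card :=
      Finset.card_union_le _ _
    have h2' := Finset.card_image_le (s := (Finset.univ : Finset (Fin M₁))) (f := t)
    have h3' := Finset.card_image_le (s := (Finset.univ : Finset (Fin M₂))) (f := t')
    simp only [Finset.card_univ, Fintype.card_fin] at h2' h3'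
    omega
  -- moments agree for all polynomials of degree ≤ N
  have hpoly : ∀ p : Polynomial ℝ, p.natDegree ≤ N →
      ∑ j, c j * p.eval (t j) = ∑ j, c' j * p.eval (t' j) := by
    intro p hp
    have hev : ∀ x : ℝ, p.eval x = ∑ i ∈ Finset.range (N + 1), p.coeff i * x ^ i := fun x =>
      Polynomial.eval_eq_sum_range' (Nat.lt_succ_of_le hp) x
    simp only [hev, Finset.mul_sum]
    rw [Finset.sum_comm, Finset.sum_comm (s := Finset.univ)]
    apply Finset.sum_congr rfl
    intro i hi
    have hi' : i < N + 1 := Finset.mem_range.1 hi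
    have := heq ⟨i, hi'⟩
    simp only at this
    calc ∑ j, c j * (p.coeff i * t j ^ i)
        = p.coeff i * ∑ j, c j * t j ^ i := by rw [Finset.mul_sum]; congr 1; ext j; ring
      _ = p.coeff i * ∑ j, c' j * t' j ^ i := by rw [this]
      _ = ∑ j, c' j * (p.coeff i * t' j ^ i) := by rw [Finset.mul_sum]; congr 1; ext j; ring
  -- key: grouped coefficients agree at every node
  have hAB : ∀ s₀ ∈ S, (∑ j, if t j = s₀ then c j else 0)
      = ∑ j, if t' j = s₀ then c' j else 0 := by
    intro s₀ hs₀
    set p : Polynomial ℝ := ∏ s ∈ S.erase s₀, (Polynomial.X - Polynomial.C s) with hpdef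
    have hdeg : p.natDegree ≤ N := by
      have hd : p.natDegree = (S.erase s₀).card := by
        rw [hpdef, Polynomial.natDegree_prod _ _ (fun s _ => Polynomial.X_sub_C_ne_zero s)]
        simp [Polynomial.natDegree_X_sub_C]
      rw [hd]
      have := Finset.card_erase_of_mem hs₀
      omega
    have heval : ∀ x ∈ S, x ≠ s₀ → p.eval x = 0 := by
      intro x hx hne
      rw [hpdef, Polynomial.eval_prod]
      exact Finset.prod_eq_zero (Finset.mem_erase.2 ⟨hne, hx⟩) (by simp)
    have hne0 : p.eval s₀ ≠ 0 := by
      rw [hpdef, Polynomial.eval_prod]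
      apply Finset.prod_ne_zero_iff.2
      intro s hs
      have hne := (Finset.mem_erase.1 hs).1
      simp only [Polynomial.eval_sub, Polynomial.eval_X, Polynomial.eval_C, sub_ne_zero]
      exact fun hq => hne hq.symm
    have hL : ∑ j, c j * p.eval (t j) = (∑ j, if t j = s₀ then c j else 0) * p.eval s₀ := by
      rw [Finset.sum_mul]
      apply Finset.sum_congr rfl
      intro j _
      by_cases hj : t j = s₀
      · simp [hj]
      · simp [hj, heval (t j) (htS j) hj]
    have hR : ∑ j, c' j * p.eval (t' j) = (∑ j, if t' j = s₀ then c' j else 0) * p.eval s₀ := by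
      rw [Finset.sum_mul]
      apply Finset.sum_congr rfl
      intro j _
      by_cases hj : t' j = s₀
      · simp [hj]
      · simp [hj, heval (t' j) (ht'S j) hj]
    have := hpoly p hdeg
    rw [hL, hR] at this
    exact mul_right_cancel₀ hne0 this
  have hAt : ∀ j : Fin M₁, (∑ j', if t j' = t j then c j' else 0) = c j := by
    intro j
    simp [hst.injective.eq_iff, Finset.sum_ite_eq']
  have hAt' : ∀ j : Fin M₂, (∑ j', if t' j' = t' j then c' j' else 0) = c' j := by
    intro j
    simp [hst'.injective.eq_iff, Finset.sum_ite_eq']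
  have hsub : ∀ j : Fin M₁, ∃ k', t' k' = t j := by
    intro j
    by_contra hcon
    push_neg at hcon
    have hth := hAB (t j) (htS j)
    rw [hAt j] at hth
    have hz : (∑ j', if t' j' = t j then c' j' else 0) = 0 :=
      Finset.sum_eq_zero fun k' _ => by simp [hcon k']
    rw [hz] at hth
    exact (hc j).ne' hth
  have hsub' : ∀ j : Fin M₂, ∃ k', t k' = t' j := by
    intro j
    by_contra hcon
    push_neg at hcon
    have hth := hAB (t' j) (ht'S j)
    rw [hAt' j] at hth
    have hz : (∑ j', if t j' = t' j then c j' else 0) = 0 :=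
      Finset.sum_eq_zero fun k' _ => by simp [hcon k']
    rw [hz] at hth
    exact (hc' j).ne' hth.symm
  have himg : Finset.image t Finset.univ = Finset.image t' Finset.univ := by
    apply Finset.Subset.antisymm
    · intro x hx
      obtain ⟨j, _, rfl⟩ := Finset.mem_image.1 hx
      obtain ⟨k', hk'⟩ := hsub j
      exact Finset.mem_image.2 ⟨k', Finset.mem_univ _, hk'⟩
    · intro x hx
      obtain ⟨j, _, rfl⟩ := Finset.mem_image.1 hx
      obtain ⟨k', hk'⟩ := hsub' j
      exact Finset.mem_image.2 ⟨k', Finset.mem_univ _, hk'⟩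
  have hcard1 : (Finset.image t Finset.univ).card = M₁ := by
    rw [Finset.card_image_of_injective _ hst.injective, Finset.card_univ, Fintype.card_fin]
  have hcard2 : (Finset.image t' Finset.univ).card = M₂ := by
    rw [Finset.card_image_of_injective _ hst'.injective, Finset.card_univ, Fintype.card_fin]
  have hM : M₁ = M₂ := by rw [← hcard1, ← hcard2, himg]
  refine ⟨hM, fun j => ?_⟩
  have hstc : StrictMono (fun j : Fin M₁ => t' (Fin.cast hM j)) := by
    intro a b hab
    exact hst' (by simp only [Fin.lt_def, Fin.coe_cast]; exact hab)
  have hteq : t = fun j : Fin M₁ => t' (Fin.cast hM j) := by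
    have e1 := Finset.orderEmbOfFin_unique hcard1 (f := t)
      (fun x => Finset.mem_image_of_mem _ (Finset.mem_univ x)) hst
    have e2 := Finset.orderEmbOfFin_unique hcard1 (f := fun j : Fin M₁ => t' (Fin.cast hM j))
      (fun x => by rw [himg]; exact Finset.mem_image_of_mem _ (Finset.mem_univ _)) hstc
    rw [e1, e2]
  have htj : t j = t' (Fin.cast hM j) := by rw [hteq]
  refine ⟨?_, htj⟩
  have hth := hAB (t j) (htS j)
  rw [hAt j] at hth
  rw [hth, htj]
  have : (∑ j', if t' j' = t' (Fin.cast hM j) then c' j' else 0) = c' (Fin.cast hM j) :=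
    hAt' (Fin.cast hM j)
  rw [← this]
end

section
/- Let N be a positive integer, t_min < t_max, and suppose Σ_{j=1}^{M₁} c_j · (1, t_j, ..., t_j^N) = Σ_{j=1}^{M₂} c'_j · (1, t'_j, ..., t'_j^N) with all c_j, c'_j > 0, all t_j, t'_j ∈ [t_min, t_max], t_1 < t_2 < ... < t_{M₁}, t'_1 < ... < t'_{M₂}, and M₁ + M₂ ≤ N + 2 with t_1 = t'_1 = t_min. Then the two representations coincide term by term: M₁ = M₂ and (c_j, t_j) = (c'_j, t'_j) for all j. -/
open Finset Polynomial

lemma moment_zero_key (N : ℕ) (S : Finset ℝ) (hS : S.card ≤ N + 1) (a : ℝ → ℝ)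
    (h : ∀ p ≤ N, ∑ s ∈ S, a s * s ^ p = 0) : ∀ s ∈ S, a s = 0 := by
  intro s0 hs0
  have hinj : Set.InjOn id (S : Set ℝ) := Function.injective_id.injOn
  set P := Lagrange.basis S id s0 with hP
  have hdeg : P.natDegree ≤ N := by
    rw [hP, Lagrange.natDegree_basis hinj hs0]
    omega
  have hsum : ∑ s ∈ S, a s * P.eval s = 0 := by
    have : ∀ s ∈ S, a s * P.eval s =
        ∑ p ∈ Finset.range (N + 1), P.coeff p * (a s * s ^ p) := by
      intro s hs
      rw [Polynomial.eval_eq_sum_range' (lt_of_le_of_lt hdeg (Nat.lt_succ_self N)),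
        Finset.mul_sum]
      exact Finset.sum_congr rfl fun p _ => by ring
    rw [Finset.sum_congr rfl this, Finset.sum_comm]
    refine Finset.sum_eq_zero fun p hp => ?_
    rw [← Finset.mul_sum, h p (by simpa using Nat.lt_succ_iff.mp (Finset.mem_range.mp hp)),
      mul_zero]
  have : ∑ s ∈ S, a s * P.eval s = a s0 := by
    rw [Finset.sum_eq_single s0]
    · have h1 := Lagrange.eval_basis_self hinj hs0
      simp only [id] at h1
      rw [hP, h1, mul_one]
    · intro s hs hne
      rw [hP]
      have := Lagrange.eval_basis_of_ne (s := S) (v := id) (Ne.symm hne) hs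
      simp only [id] at this
      rw [this, mul_zero]
    · exact fun hh => absurd hs0 hh
  rw [this] at hsum; exact hsum

/-- Uniqueness of non-reducible half-integer namings: two convex combinations of
points on the moment curve, both anchored at `t_min`, with strictly positive
coefficients and strictly increasing parameters, using `M₁ + M₂ ≤ N + 2` terms in
total, that agree on all moments `(1, t, …, t^N)`, coincide term by term. -/
theorem nonreducible_naming_unique_anchored (N : ℕ) (hN : 0 < N) (tmin tmax : ℝ)
    (h : tmin < tmax) (M₁ M₂ : ℕ) (h1 : 0 < M₁) (h2 : 0 < M₂)
    (hM : M₁ + M₂ ≤ N + 2)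
    (c t : Fin M₁ → ℝ) (c' t' : Fin M₂ → ℝ)
    (hc : ∀ j, 0 < c j) (hc' : ∀ j, 0 < c' j)
    (ht : ∀ j, t j ∈ Set.Icc tmin tmax) (ht' : ∀ j, t' j ∈ Set.Icc tmin tmax)
    (hst : StrictMono t) (hst' : StrictMono t')
    (ha : t ⟨0, h1⟩ = tmin) (ha' : t' ⟨0, h2⟩ = tmin)
    (heq : ∀ i : Fin (N + 1), ∑ j, c j * t j ^ (i : ℕ) = ∑ j, c' j * t' j ^ (i : ℕ)) :
    ∃ hM : M₁ = M₂, ∀ j : Fin M₁, c j = c' (Fin.cast hM j) ∧ t j = t' (Fin.cast hM j) := by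
  classical
  have htinj : Function.Injective t := hst.injective
  have ht'inj : Function.Injective t' := hst'.injective
  set A : Finset ℝ := Finset.image t Finset.univ with hAdef
  set B : Finset ℝ := Finset.image t' Finset.univ with hBdef
  set S : Finset ℝ := A ∪ B with hSdef
  set f : ℝ → ℝ := fun s => ∑ j ∈ Finset.univ.filter (fun j => t j = s), c j with hfdef
  set g : ℝ → ℝ := fun s => ∑ j ∈ Finset.univ.filter (fun j => t' j = s), c' j with hgdef
  have hfA : ∀ j, f (t j) = c j := by
    intro j
    have hfil : Finset.univ.filter (fun i => t i = t j) = {j} := by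
      ext i; simp [htinj.eq_iff]
    simp [hfdef, hfil]
  have hgB : ∀ j, g (t' j) = c' j := by
    intro j
    have hfil : Finset.univ.filter (fun i => t' i = t' j) = {j} := by
      ext i; simp [ht'inj.eq_iff]
    simp [hgdef, hfil]
  have hfnot : ∀ s, s ∉ A → f s = 0 := by
    intro s hs
    have hfil : Finset.univ.filter (fun i => t i = s) = ∅ := by
      ext i
      simp only [Finset.mem_filter, Finset.mem_univ, true_and, Finset.notMem_empty,
        iff_false]
      intro hti
      exact hs (by simp [hAdef, ← hti])
    simp [hfdef, hfil]
  have hgnot : ∀ s, s ∉ B → g s = 0 := by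
    intro s hs
    have hfil : Finset.univ.filter (fun i => t' i = s) = ∅ := by
      ext i
      simp only [Finset.mem_filter, Finset.mem_univ, true_and, Finset.notMem_empty,
        iff_false]
      intro hti
      exact hs (by simp [hBdef, ← hti])
    simp [hgdef, hfil]
  have hAcard : A.card = M₁ := by
    rw [hAdef, Finset.card_image_of_injective _ htinj, Finset.card_univ, Fintype.card_fin]
  have hBcard : B.card = M₂ := by
    rw [hBdef, Finset.card_image_of_injective _ ht'inj, Finset.card_univ, Fintype.card_fin]
  have hScard : S.card ≤ N + 1 := by
    have hmem : tmin ∈ A ∩ B := by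
      rw [Finset.mem_inter]
      exact ⟨Finset.mem_image.mpr ⟨⟨0, h1⟩, Finset.mem_univ _, ha⟩,
        Finset.mem_image.mpr ⟨⟨0, h2⟩, Finset.mem_univ _, ha'⟩⟩
    have h1c : 1 ≤ (A ∩ B).card := Finset.card_pos.mpr ⟨tmin, hmem⟩
    have hu := Finset.card_union_add_card_inter A B
    rw [hSdef]
    omega
  have hmemS : ∀ j, t j ∈ S := fun j => Finset.mem_union_left _ (by simp [hAdef])
  have hmemS' : ∀ j, t' j ∈ S := fun j => Finset.mem_union_right _ (by simp [hBdef])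
  have hmom : ∀ p ≤ N, ∑ s ∈ S, (f s - g s) * s ^ p = 0 := by
    intro p hp
    have hA1 : ∑ s ∈ S, f s * s ^ p = ∑ j, c j * t j ^ p := by
      rw [← Finset.sum_fiberwise_of_maps_to (fun j _ => hmemS j)
        (fun j => c j * t j ^ p)]
      refine Finset.sum_congr rfl fun s _ => ?_
      rw [hfdef]
      simp only
      rw [Finset.sum_mul]
      exact Finset.sum_congr rfl fun j hj => by
        rw [(Finset.mem_filter.mp hj).2]
    have hB1 : ∑ s ∈ S, g s * s ^ p = ∑ j, c' j * t' j ^ p := by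
      rw [← Finset.sum_fiberwise_of_maps_to (fun j _ => hmemS' j)
        (fun j => c' j * t' j ^ p)]
      refine Finset.sum_congr rfl fun s _ => ?_
      rw [hgdef]
      simp only
      rw [Finset.sum_mul]
      exact Finset.sum_congr rfl fun j hj => by
        rw [(Finset.mem_filter.mp hj).2]
    have := heq ⟨p, Nat.lt_succ_of_le hp⟩
    simp only [sub_mul, Finset.sum_sub_distrib, hA1, hB1]
    simpa using sub_eq_zero.mpr this
  have hzero := moment_zero_key N S hScard (fun s => f s - g s) hmom
  have hfg : ∀ s ∈ S, f s = g s := fun s hs => sub_eq_zero.mp (hzero s hs)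
  have hAB : A = B := by
    ext s
    constructor
    · intro hs
      obtain ⟨j, _, rfl⟩ := Finset.mem_image.mp hs
      by_contra hsB
      have := hfg _ (hmemS j)
      rw [hfA j, hgnot _ hsB] at this
      exact absurd this (ne_of_gt (hc j))
    · intro hs
      obtain ⟨j, _, rfl⟩ := Finset.mem_image.mp hs
      by_contra hsA
      have := hfg _ (hmemS' j)
      rw [hgB j, hfnot _ hsA] at this
      exact absurd this.symm (ne_of_gt (hc' j))
  have hMM : M₁ = M₂ := by rw [← hAcard, ← hBcard, hAB]
  have hcastmono : StrictMono (fun j : Fin M₁ => t' (Fin.cast hMM j)) :=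
    hst'.comp fun a b hab => hab
  have hAeq : t = A.orderEmbOfFin hAcard :=
    Finset.orderEmbOfFin_unique hAcard (fun j => by simp [hAdef]) hst
  have hBeq : (fun j : Fin M₁ => t' (Fin.cast hMM j)) = A.orderEmbOfFin hAcard :=
    Finset.orderEmbOfFin_unique hAcard (fun j => by rw [hAB]; simp [hBdef]) hcastmono
  have htt : ∀ j, t j = t' (Fin.cast hMM j) := fun j => by
    rw [hAeq]; exact (congrFun hBeq j).symm
  refine ⟨hMM, fun j => ⟨?_, htt j⟩⟩
  have := hfg _ (hmemS j)
  rw [hfA j, htt j, hgB] at this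
  exact this
end

section
/- Let N ≥ 2 be an integer, t_min < t_max, and let M = (N+3)/2 if N is odd, or M = (N+4)/2 if N is even. Suppose v ∈ ℝ^N has an M-point representation as a convex combination Σ_{j=1}^M c_j C_N(t_j) (with t_1 = t_min required if N is even). Then v also has such a representation that is reducible, i.e., where some coefficient is zero or two adjacent parameters coincide. -/
open Polynomial Finset


lemma odd_mult_of_sign_change :
    ∀ (d : ℕ) (f : Polynomial ℝ), f.natDegree = d → ∀ x y : ℝ, x < y →
      f.eval x * f.eval y < 0 → ∃ z ∈ Set.Ioo x y, Odd (rootMultiplicity z f) := by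
  intro d
  induction d using Nat.strong_induction_on with
  | _ d ih =>
    intro f hd x y hxy hsign
    have hf : f ≠ 0 := by
      rintro rfl; simp at hsign
    have hcont : ContinuousOn (fun u => f.eval u) (Set.Icc x y) := (f.continuous_aeval).continuousOn
    have hz : ∃ z ∈ Set.Ioo x y, f.eval z = 0 := by
      rcases mul_neg_iff.1 hsign with ⟨hx, hy⟩ | ⟨hx, hy⟩
      · obtain ⟨z, hz1, hz2⟩ := intermediate_value_Ioo' hxy.le hcont
          (by constructor <;> simpa : (0:ℝ) ∈ Set.Ioo (f.eval y) (f.eval x))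
        exact ⟨z, hz1, hz2⟩
      · obtain ⟨z, hz1, hz2⟩ := intermediate_value_Ioo hxy.le hcont
          (by constructor <;> simpa : (0:ℝ) ∈ Set.Ioo (f.eval x) (f.eval y))
        exact ⟨z, hz1, hz2⟩
    obtain ⟨z, hzmem, hz0⟩ := hz
    set m := rootMultiplicity z f with hm
    rcases Nat.even_or_odd m with hme | hmo
    · -- even: divide out
      set g := f /ₘ (X - C z) ^ m with hg
      have hfg : (X - C z) ^ m * g = f := pow_mul_divByMonic_rootMultiplicity_eq f z
      have hgz : g.eval z ≠ 0 := eval_divByMonic_pow_rootMultiplicity_ne_zero z hf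
      have hg0 : g ≠ 0 := fun h => hgz (by simp [h])
      have hmpos : 0 < m := (rootMultiplicity_pos hf).2 hz0
      have hdeg : g.natDegree < d := by
        have : ((X - C z) ^ m).natDegree + g.natDegree = f.natDegree := by
          rw [← natDegree_mul (pow_ne_zero _ (X_sub_C_ne_zero z)) hg0, hfg]
        have hXm : ((X - C z) ^ m).natDegree = m := by
          simp [natDegree_pow]
        omega
      have hx : f.eval x = (x - z)^m * g.eval x := by rw [← hfg]; simp
      have hy : f.eval y = (y - z)^m * g.eval y := by rw [← hfg]; simp
      have hxz : (0:ℝ) < (x - z)^m := hme.pow_pos (sub_ne_zero.2 (ne_of_lt hzmem.1))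
      have hyz : (0:ℝ) < (y - z)^m := hme.pow_pos (sub_ne_zero.2 (ne_of_gt hzmem.2))
      have hgsign : g.eval x * g.eval y < 0 := by
        rw [hx, hy] at hsign
        nlinarith [mul_pos hxz hyz, hsign]
      obtain ⟨w, hwmem, hwodd⟩ := ih g.natDegree hdeg g rfl x y hxy hgsign
      refine ⟨w, hwmem, ?_⟩
      have hwz : w ≠ z := by
        intro hwz
        have : 0 < rootMultiplicity w g := hwodd.pos
        exact hgz (hwz ▸ ((rootMultiplicity_pos hg0).1 this))
      have heq : rootMultiplicity w f = rootMultiplicity w ((X - C z)^m) + rootMultiplicity w g := by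
        rw [← rootMultiplicity_mul (hfg.symm ▸ hf)]
        exact congrArg _ hfg.symm
      have h0 : rootMultiplicity w ((X - C z)^m) = 0 := by
        apply rootMultiplicity_eq_zero
        simp [IsRoot, sub_ne_zero.2 hwz]
      rw [heq, h0, zero_add]
      exact hwodd
    · exact ⟨z, hzmem, hmo⟩


lemma no_sign_change (f : Polynomial ℝ) (A B : ℝ)
    (hroots : ∀ z ∈ Set.Ioo A B, Even (rootMultiplicity z f))
    (hlem : ∀ x y : ℝ, x < y → f.eval x * f.eval y < 0 →
      ∃ z ∈ Set.Ioo x y, Odd (rootMultiplicity z f)) :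
    (∀ x ∈ Set.Icc A B, 0 ≤ f.eval x) ∨ (∀ x ∈ Set.Icc A B, f.eval x ≤ 0) := by
  by_contra hcon
  push_neg at hcon
  obtain ⟨⟨x, hx, hfx⟩, ⟨y, hy, hfy⟩⟩ := hcon
  have key : ∀ u v : ℝ, u ∈ Set.Icc A B → v ∈ Set.Icc A B → u < v →
      ¬ (f.eval u * f.eval v < 0) := by
    intro u v hu hv huv hneg
    obtain ⟨z, hz, hodd⟩ := hlem u v huv hneg
    have : z ∈ Set.Ioo A B := ⟨lt_of_le_of_lt hu.1 hz.1, lt_of_lt_of_le hz.2 hv.2⟩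
    exact (Nat.not_even_iff_odd.2 hodd) (hroots z this)
  rcases lt_trichotomy x y with hlt | heq | hgt
  · exact key x y hx hy hlt (mul_neg_of_neg_of_pos hfx hfy)
  · rw [heq] at hfx; linarith
  · exact key y x hy hx hgt (mul_neg_of_pos_of_neg hfy hfx)


theorem gauss_quadrature_s11 (n : ℕ) (hn : 1 ≤ n) (A B : ℝ)
    (c t : Fin (n+1) → ℝ) (hc : ∀ j, 0 < c j) (htinj : Function.Injective t)
    (htAB : ∀ j, t j ∈ Set.Icc A B)
    (hlem : ∀ (f : Polynomial ℝ) (x y : ℝ), x < y → f.eval x * f.eval y < 0 →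
      ∃ z ∈ Set.Ioo x y, Odd (rootMultiplicity z f))
    (hnsc : ∀ f : Polynomial ℝ, (∀ z ∈ Set.Ioo A B, Even (rootMultiplicity z f)) →
      (∀ x ∈ Set.Icc A B, 0 ≤ f.eval x) ∨ (∀ x ∈ Set.Icc A B, f.eval x ≤ 0)) :
    ∃ w s : Fin n → ℝ, (∀ i, 0 ≤ w i) ∧ StrictMono s ∧ (∀ i, s i ∈ Set.Ioo A B) ∧
      ∀ f : Polynomial ℝ, f.natDegree ≤ 2*n - 1 →
        ∑ i, w i * f.eval (s i) = ∑ j, c j * f.eval (t j) := by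
  classical
  -- vanishing lemma
  have hvan : ∀ p : Polynomial ℝ, p.natDegree ≤ n → (∀ j, p.eval (t j) = 0) → p = 0 := by
    intro p hdeg heval
    exact eq_zero_of_natDegree_lt_card_of_eval_eq_zero p htinj heval
      (by simpa using Nat.lt_succ_of_le hdeg)
  -- the Gram linear map
  have hsmul : ∀ (r : ℝ) (a : Fin n → ℝ) (j : Fin (n+1)),
      ∑ k : Fin n, (r * a k) * t j ^ (k:ℕ) = r * ∑ k : Fin n, a k * t j ^ (k:ℕ) := by
    intro r a j
    rw [Finset.mul_sum]
    exact Finset.sum_congr rfl fun k _ => by ring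
  set φ : (Fin n → ℝ) →ₗ[ℝ] (Fin n → ℝ) :=
    { toFun := fun a i => ∑ j, c j * (∑ k, a k * t j ^ (k:ℕ)) * t j ^ (i:ℕ)
      map_add' := by
        intro a b; funext i
        simp [add_mul, mul_add, Finset.sum_add_distrib]
      map_smul' := by
        intro r a; funext i
        simp only [Pi.smul_apply, smul_eq_mul, RingHom.id_apply]
        rw [Finset.mul_sum]
        refine Finset.sum_congr rfl fun j _ => ?_
        rw [hsmul]
        ring } with hφ
  have hφa : ∀ (a : Fin n → ℝ) (i : Fin n),
      φ a i = ∑ j, c j * (∑ k, a k * t j ^ (k:ℕ)) * t j ^ (i:ℕ) := fun a i => rfl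
  have hinj : Function.Injective φ := by
    rw [injective_iff_map_eq_zero]
    intro a ha
    have hquad : ∑ j, c j * (∑ k, a k * t j ^ (k:ℕ))^2 = 0 := by
      have h1 : ∑ i, (φ a i) * a i = 0 := by rw [ha]; simp
      simp only [hφa] at h1
      have h2 : ∑ j, c j * (∑ k, a k * t j ^ (k:ℕ))^2
          = ∑ j, ∑ i : Fin n, (c j * (∑ k, a k * t j ^ (k:ℕ)) * t j ^ (i:ℕ)) * a i := by
        refine Finset.sum_congr rfl fun j _ => ?_
        have h3 : ∑ i : Fin n, (c j * (∑ k, a k * t j ^ (k:ℕ)) * t j ^ (i:ℕ)) * a i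
            = (c j * (∑ k, a k * t j ^ (k:ℕ))) * ∑ i : Fin n, a i * t j ^ (i:ℕ) := by
          conv_rhs => rw [Finset.mul_sum]
          exact Finset.sum_congr rfl fun i _ => by ring
        rw [h3]; ring
      rw [h2, Finset.sum_comm]
      simp_rw [← Finset.sum_mul]
      exact h1
    have hall : ∀ j, ∑ k, a k * t j ^ (k:ℕ) = 0 := by
      intro j
      have hnn : ∀ j ∈ Finset.univ, (0:ℝ) ≤ c j * (∑ k, a k * t j ^ (k:ℕ))^2 :=
        fun j _ => mul_nonneg (hc j).le (sq_nonneg _)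
      have h4 := (Finset.sum_eq_zero_iff_of_nonneg hnn).1 hquad j (Finset.mem_univ j)
      have h2 : (∑ k, a k * t j ^ (k:ℕ))^2 = 0 := by
        have := hc j; nlinarith
      exact pow_eq_zero_iff (by norm_num) |>.1 h2
    set p : Polynomial ℝ := ∑ k : Fin n, C (a k) * X ^ (k:ℕ) with hp
    have hpeval : ∀ x : ℝ, p.eval x = ∑ k, a k * x ^ (k:ℕ) := by
      intro x; rw [hp]; simp [eval_finset_sum]
    have hpdeg : p.natDegree ≤ n := by
      apply le_trans (natDegree_sum_le _ _)
      simp only [Finset.fold_max_le]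
      refine ⟨Nat.zero_le _, fun k _ => ?_⟩
      refine le_trans (natDegree_C_mul_le _ _) (le_trans (natDegree_X_pow_le _) ?_)
      omega
    have hp0 : p = 0 := hvan p hpdeg (fun j => by rw [hpeval]; exact hall j)
    funext k
    have h5 := congrArg (fun q => Polynomial.coeff q (k:ℕ)) hp0
    simp only [hp, Polynomial.finset_sum_coeff, coeff_C_mul, coeff_X_pow, coeff_zero] at h5
    rw [Finset.sum_eq_single k] at h5
    · simpa using h5
    · intro b _ hbk
      have hkb : (k:ℕ) ≠ (b:ℕ) := fun hh => hbk (Fin.ext hh.symm)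
      simp [hkb]
    · simp
  obtain ⟨a, hamap⟩ := (LinearMap.injective_iff_surjective).1 hinj
    (fun i => ∑ j, c j * t j ^ (n:ℕ) * t j ^ (i:ℕ))
  -- the orthogonal polynomial
  set P : Polynomial ℝ := X ^ n - ∑ k : Fin n, C (a k) * X ^ (k:ℕ) with hPdef
  have hPeval : ∀ x : ℝ, P.eval x = x ^ n - ∑ k, a k * x ^ (k:ℕ) := by
    intro x; rw [hPdef]; simp [eval_finset_sum]
  have hqdeg : (∑ k : Fin n, C (a k) * X ^ (k:ℕ)).degree < (n : WithBot ℕ) := by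
    apply lt_of_le_of_lt (degree_sum_le _ _)
    rw [Finset.sup_lt_iff (by exact_mod_cast WithBot.bot_lt_coe n)]
    intro k _
    calc (C (a k) * X ^ (k:ℕ)).degree
        ≤ (C (a k)).degree + (X ^ (k:ℕ) : Polynomial ℝ).degree := degree_mul_le _ _
      _ ≤ 0 + ((k:ℕ) : WithBot ℕ) := add_le_add degree_C_le (degree_X_pow _).le
      _ = ((k:ℕ) : WithBot ℕ) := zero_add _
      _ < (n : WithBot ℕ) := by exact_mod_cast k.2
  have hPmonic : P.Monic := monic_X_pow_sub hqdeg
  have hP0 : P ≠ 0 := hPmonic.ne_zero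
  have hPdeg : P.natDegree = n := by
    have : P.degree = n := by
      rw [hPdef]
      rw [degree_sub_eq_left_of_degree_lt (by rwa [degree_X_pow])]
      exact degree_X_pow n
    exact natDegree_eq_of_degree_eq_some this
  -- orthogonality for monomials
  have horthmono : ∀ i : Fin n, ∑ j, c j * P.eval (t j) * t j ^ (i:ℕ) = 0 := by
    intro i
    have h6 := congrFun hamap i
    simp only [hφa] at h6
    have h7 : ∑ j, c j * P.eval (t j) * t j ^ (i:ℕ)
        = ∑ j, (c j * t j ^ (n:ℕ) * t j ^ (i:ℕ)
            - c j * (∑ k, a k * t j ^ (k:ℕ)) * t j ^ (i:ℕ)) := by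
      refine Finset.sum_congr rfl fun j _ => ?_
      rw [hPeval]; ring
    rw [h7, Finset.sum_sub_distrib, h6]
    ring
  -- orthogonality general
  have horth : ∀ q : Polynomial ℝ, q.natDegree < n →
      ∑ j, c j * P.eval (t j) * q.eval (t j) = 0 := by
    intro q hq
    have h8 : ∀ j, q.eval (t j) = ∑ i ∈ Finset.range n, q.coeff i * t j ^ i :=
      fun j => eval_eq_sum_range' hq _
    have h9a : ∀ j, c j * P.eval (t j) * q.eval (t j)
        = ∑ i ∈ Finset.range n, q.coeff i * (c j * P.eval (t j) * t j ^ i) := by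
      intro j
      rw [h8 j, Finset.mul_sum]
      refine Finset.sum_congr rfl fun i _ => by ring
    have h9 : ∑ j, c j * P.eval (t j) * q.eval (t j)
        = ∑ i ∈ Finset.range n, q.coeff i * ∑ j, c j * P.eval (t j) * t j ^ i := by
      calc ∑ j, c j * P.eval (t j) * q.eval (t j)
          = ∑ j, ∑ i ∈ Finset.range n, q.coeff i * (c j * P.eval (t j) * t j ^ i) :=
            Finset.sum_congr rfl fun j _ => h9a j
        _ = ∑ i ∈ Finset.range n, ∑ j, q.coeff i * (c j * P.eval (t j) * t j ^ i) :=
            Finset.sum_comm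
        _ = ∑ i ∈ Finset.range n, q.coeff i * ∑ j, c j * P.eval (t j) * t j ^ i :=
            Finset.sum_congr rfl fun i _ => (Finset.mul_sum _ _ _).symm
    rw [h9]
    refine Finset.sum_eq_zero fun i hi => ?_
    rw [show (i:ℕ) = ((⟨i, Finset.mem_range.1 hi⟩ : Fin n) : ℕ) from rfl, horthmono]
    ring
  -- sign-change roots of P in (A,B)
  set S : Finset ℝ := P.roots.toFinset.filter
    (fun r => r ∈ Set.Ioo A B ∧ Odd (rootMultiplicity r P)) with hSdef
  set Q : Polynomial ℝ := ∏ r ∈ S, (X - C r) with hQdef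
  have hQ0 : Q ≠ 0 := by
    rw [hQdef]; exact Finset.prod_ne_zero_iff.2 fun r _ => X_sub_C_ne_zero r
  have hPQ0 : P * Q ≠ 0 := mul_ne_zero hP0 hQ0
  have hQroots : Q.roots = S.val := roots_prod_X_sub_C S
  have hQmult : ∀ z : ℝ, rootMultiplicity z Q = if z ∈ S then 1 else 0 := by
    intro z
    rw [← count_roots, hQroots]
    by_cases hz : z ∈ S
    · rw [if_pos hz]
      exact Multiset.count_eq_one_of_mem S.nodup hz
    · rw [if_neg hz]
      exact Multiset.count_eq_zero_of_notMem (by simpa using hz)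
  have hQdeg : Q.natDegree = S.card := by
    rw [hQdef, natDegree_prod _ _ (fun r _ => X_sub_C_ne_zero r)]
    simp [natDegree_X_sub_C]
  have hSP : ∀ z ∈ S, P.eval z = 0 := by
    intro z hz
    rw [hSdef] at hz
    have := (Finset.mem_filter.1 hz).1
    rw [Multiset.mem_toFinset, mem_roots hP0] at this
    exact this
  have hSIoo : ∀ z ∈ S, z ∈ Set.Ioo A B := fun z hz => ((Finset.mem_filter.1 hz).2).1
  have claimEven : ∀ z ∈ Set.Ioo A B, Even (rootMultiplicity z (P * Q)) := by
    intro z hz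
    rw [rootMultiplicity_mul hPQ0, hQmult z]
    by_cases hzS : z ∈ S
    · rw [if_pos hzS]
      exact Odd.add_one ((Finset.mem_filter.1 hzS).2.2)
    · rw [if_neg hzS, add_zero]
      by_contra hodd
      rw [Nat.not_even_iff_odd] at hodd
      have hroot : P.eval z = 0 := by
        have := hodd.pos
        exact (rootMultiplicity_pos hP0).1 this
      exact hzS (by
        rw [hSdef, Finset.mem_filter, Multiset.mem_toFinset, mem_roots hP0]
        exact ⟨hroot, hz, hodd⟩)
  have hSle : S.card ≤ n := by
    calc S.card ≤ P.roots.toFinset.card := Finset.card_le_card (Finset.filter_subset _ _)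
      _ ≤ Multiset.card P.roots := Multiset.toFinset_card_le _
      _ ≤ P.natDegree := card_roots' P
      _ = n := hPdeg
  have hSge : n ≤ S.card := by
    by_contra hlt
    push_neg at hlt
    have hQdeglt : Q.natDegree < n := by rw [hQdeg]; omega
    have horthQ := horth Q hQdeglt
    have hsum0 : ∑ j, c j * (P * Q).eval (t j) = 0 := by
      rw [← horthQ]
      exact Finset.sum_congr rfl fun j _ => by rw [eval_mul]; ring
    have hPt : ∀ j, P.eval (t j) = 0 := by
      have hPQt : ∀ j, (P * Q).eval (t j) = 0 := by
        rcases hnsc (P * Q) claimEven with hpos | hneg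
        · intro j
          have hzero := (Finset.sum_eq_zero_iff_of_nonneg
            (fun j _ => mul_nonneg (hc j).le (hpos _ (htAB j)))).1 hsum0 j (Finset.mem_univ j)
          have := hc j
          nlinarith [hzero]
        · intro j
          have hsum0' : ∑ j, -(c j * (P * Q).eval (t j)) = 0 := by
            rw [Finset.sum_neg_distrib, hsum0, neg_zero]
          have hzero := (Finset.sum_eq_zero_iff_of_nonneg
            (fun j _ => by
              have := mul_nonpos_of_nonneg_of_nonpos (hc j).le (hneg _ (htAB j))
              linarith)).1 hsum0' j (Finset.mem_univ j)
          have := hc j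
          nlinarith [hzero]
      intro j
      have := hPQt j
      rw [eval_mul] at this
      rcases mul_eq_zero.1 this with h | h
      · exact h
      · have : t j ∈ S := by
          have : t j ∈ Q.roots := (mem_roots hQ0).2 h
          rw [hQroots] at this
          simpa using this
        exact hSP _ this
    exact hP0 (hvan P hPdeg.le hPt)
  have hScard : S.card = n := le_antisymm hSle hSge
  -- nodes
  set s : Fin n ↪o ℝ := S.orderEmbOfFin hScard with hsdef
  have smem : ∀ i, s i ∈ S := fun i => S.orderEmbOfFin_mem hScard i
  have hsIoo : ∀ i, s i ∈ Set.Ioo A B := fun i => hSIoo _ (smem i)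
  have hPs0 : ∀ i, P.eval (s i) = 0 := fun i => hSP _ (smem i)
  have sInjOn : Set.InjOn (⇑s) ↑(Finset.univ : Finset (Fin n)) := s.injective.injOn
  have hcardu : #(Finset.univ : Finset (Fin n)) = n := by simp
  -- weights
  set w : Fin n → ℝ := fun i => ∑ j, c j * (Lagrange.basis Finset.univ (⇑s) i).eval (t j)
    with hwdef
  have hinterp : ∀ r : Polynomial ℝ, r.degree < (n : WithBot ℕ) →
      ∑ i, w i * r.eval (s i) = ∑ j, c j * r.eval (t j) := by
    intro r hr
    have hrint : r = Lagrange.interpolate Finset.univ (⇑s) (fun i => r.eval (s i)) :=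
      Lagrange.eq_interpolate sInjOn (by rwa [hcardu])
    have hev : ∀ j, r.eval (t j)
        = ∑ i, r.eval (s i) * (Lagrange.basis Finset.univ (⇑s) i).eval (t j) := by
      intro j
      conv_lhs => rw [hrint]
      rw [Lagrange.interpolate_apply, eval_finset_sum]
      exact Finset.sum_congr rfl fun i _ => by rw [eval_mul, eval_C]
    calc ∑ i, w i * r.eval (s i)
        = ∑ i, ∑ j, (c j * (Lagrange.basis Finset.univ (⇑s) i).eval (t j)) * r.eval (s i) := by
          refine Finset.sum_congr rfl fun i _ => ?_
          rw [hwdef]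
          exact Finset.sum_mul _ _ _
      _ = ∑ j, ∑ i, (c j * (Lagrange.basis Finset.univ (⇑s) i).eval (t j)) * r.eval (s i) :=
          Finset.sum_comm
      _ = ∑ j, c j * r.eval (t j) := by
          refine Finset.sum_congr rfl fun j _ => ?_
          rw [hev j, Finset.mul_sum]
          exact Finset.sum_congr rfl fun i _ => by ring
  have hexact : ∀ f : Polynomial ℝ, f.natDegree ≤ 2*n - 1 →
      ∑ i, w i * f.eval (s i) = ∑ j, c j * f.eval (t j) := by
    intro f hf
    set g := f /ₘ P with hgdef
    set r := f %ₘ P with hrdef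
    have hdecomp : r + P * g = f := modByMonic_add_div f P
    have hPdegree : P.degree = (n : ℕ) := by rw [degree_eq_natDegree hP0, hPdeg]
    have hrdeg : r.degree < (n : WithBot ℕ) := by
      rw [← hPdegree]; exact degree_modByMonic_lt f hPmonic
    have hgdeg : g.natDegree < n := by
      have h11 : g.natDegree = f.natDegree - P.natDegree := natDegree_divByMonic f hPmonic
      rw [hPdeg] at h11
      omega
    have hfeval : ∀ x, f.eval x = r.eval x + P.eval x * g.eval x := fun x => by
      rw [← hdecomp]; simp
    calc ∑ i, w i * f.eval (s i)
        = ∑ i, w i * r.eval (s i) := by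
          refine Finset.sum_congr rfl fun i _ => ?_
          rw [hfeval, hPs0 i]; ring
      _ = ∑ j, c j * r.eval (t j) := hinterp r hrdeg
      _ = ∑ j, c j * f.eval (t j) := by
          have h10 : ∑ j, c j * P.eval (t j) * g.eval (t j) = 0 := horth g hgdeg
          have h12 : ∑ j, c j * f.eval (t j)
              = ∑ j, c j * r.eval (t j) + ∑ j, c j * P.eval (t j) * g.eval (t j) := by
            rw [← Finset.sum_add_distrib]
            exact Finset.sum_congr rfl fun j _ => by rw [hfeval]; ring
          rw [h12, h10, add_zero]
  have hwnn : ∀ i, 0 ≤ w i := by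
    intro i
    have hbdeg : (Lagrange.basis Finset.univ (⇑s) i).natDegree = n - 1 := by
      have := Lagrange.natDegree_basis sInjOn (Finset.mem_univ i)
      rwa [hcardu] at this
    have hsq : ((Lagrange.basis Finset.univ (⇑s) i)^2).natDegree ≤ 2*n - 1 := by
      rw [natDegree_pow, hbdeg]; omega
    have hx := hexact _ hsq
    have hL : ∑ k, w k * ((Lagrange.basis Finset.univ (⇑s) i)^2).eval (s k) = w i := by
      rw [Finset.sum_eq_single i]
      · rw [eval_pow, Lagrange.eval_basis_self sInjOn (Finset.mem_univ i)]; ring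
      · intro k _ hki
        rw [eval_pow, Lagrange.eval_basis_of_ne (Ne.symm hki) (Finset.mem_univ k)]
        ring
      · intro hi; exact absurd (Finset.mem_univ i) hi
    rw [hL] at hx
    rw [hx]
    refine Finset.sum_nonneg fun j _ => ?_
    rw [eval_pow]
    exact mul_nonneg (hc j).le (sq_nonneg _)
  exact ⟨w, ⇑s, hwnn, s.strictMono, hsIoo, hexact⟩

/-- Existence of reducible namings: for `N ≥ 2` and `M = (N+3)/2` (`N` odd) or
`(N+4)/2` (`N` even), any point `v` with an `M`-point representation (anchored at
`t_min` when `N` is even) also has such a representation that is reducible: some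
coefficient (not the anchor's, when `N` is even) is zero, or two adjacent
parameters coincide. -/
theorem exists_reducible_rep (N : ℕ) (hN : 2 ≤ N) (tmin tmax : ℝ) (h : tmin < tmax)
    (M : ℕ) (hM : M = if Odd N then (N + 3) / 2 else (N + 4) / 2) (hMpos : 0 < M)
    (v : Fin N → ℝ) (c t : Fin M → ℝ)
    (hc : ∀ j, 0 ≤ c j) (hs : ∑ j, c j = 1)
    (ht : ∀ j, t j ∈ Set.Icc tmin tmax) (hmono : Monotone t)
    (hanchor : Even N → t ⟨0, hMpos⟩ = tmin)
    (hv : ∀ i : Fin N, ∑ j, c j * t j ^ ((i : ℕ) + 1) = v i) :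
    ∃ c' t' : Fin M → ℝ,
      (∀ j, 0 ≤ c' j) ∧ (∑ j, c' j = 1) ∧ (∀ j, t' j ∈ Set.Icc tmin tmax) ∧
      Monotone t' ∧ (Even N → t' ⟨0, hMpos⟩ = tmin) ∧
      (∀ i : Fin N, ∑ j, c' j * t' j ^ ((i : ℕ) + 1) = v i) ∧
      ((∃ j : Fin M, (Even N → (j : ℕ) ≠ 0) ∧ c' j = 0) ∨
        ∃ (j : ℕ) (h1 : j + 1 < M), t' ⟨j, by omega⟩ = t' ⟨j + 1, h1⟩) := by
  by_cases hred : (∃ j : Fin M, (Even N → (j : ℕ) ≠ 0) ∧ c j = 0) ∨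
      ∃ (j : ℕ) (h1 : j + 1 < M), t ⟨j, by omega⟩ = t ⟨j + 1, h1⟩
  · exact ⟨c, t, hc, hs, ht, hmono, hanchor, hv, hred⟩
  push_neg at hred
  obtain ⟨hred1, hred2⟩ := hred
  have hlem := odd_mult_of_sign_change
  by_cases hoddN : Odd N
  · -- odd case
    obtain ⟨k, hk⟩ := hoddN
    rw [if_pos ⟨k, hk⟩] at hM
    set n : ℕ := k + 1 with hndef
    have hn1 : 1 ≤ n := by omega
    have hMn : M = n + 1 := by omega
    subst hMn
    have hcpos : ∀ j, 0 < c j := by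
      intro j
      rcases (hc j).lt_or_eq with hlt | heq
      · exact hlt
      · exact absurd heq.symm (hred1 j (fun hev => absurd ⟨k, hk⟩ (Nat.not_odd_iff_even.2 hev)))
    have tstrict : StrictMono t := by
      rw [Fin.strictMono_iff_lt_succ]
      intro i
      refine lt_of_le_of_ne (hmono ?_) (hred2 i.val (by omega))
      simp [Fin.le_def]
    obtain ⟨w, s, hw, smono, hsIoo, hex⟩ := gauss_quadrature_s11 n hn1 tmin tmax c t hcpos
      tstrict.injective ht (fun f => hlem f.natDegree f rfl)
      (fun f hr => no_sign_change f tmin tmax hr (fun x y => hlem f.natDegree f rfl x y))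
    set c' : Fin (n+1) → ℝ := fun j => if hj : (j:ℕ) < n then w ⟨j, hj⟩ else 0 with hc'def
    set t' : Fin (n+1) → ℝ := fun j => s ⟨min (j:ℕ) (n-1), by omega⟩ with ht'def
    have hckey : ∀ dd : ℕ, ∑ j : Fin (n+1), c' j * t' j ^ dd = ∑ i : Fin n, w i * s i ^ dd := by
      intro dd
      rw [Fin.sum_univ_castSucc]
      have hlast : c' (Fin.last n) = 0 := dif_neg (by simp)
      rw [hlast, zero_mul, add_zero]
      refine Finset.sum_congr rfl fun i _ => ?_
      have h1 : c' (Fin.castSucc i) = w i := by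
        simp only [hc'def, Fin.coe_castSucc]
        rw [dif_pos i.isLt]
      have h2 : t' (Fin.castSucc i) = s i := by
        simp only [ht'def]
        congr 1
        apply Fin.ext
        have := i.isLt
        simp only [Fin.coe_castSucc]
        omega
      rw [h1, h2]
    have hckey0 : ∑ j : Fin (n+1), c' j = ∑ i : Fin n, w i := by
      have := hckey 0
      simpa using this
    have hwsum : ∑ i : Fin n, w i = 1 := by
      have := hex 1 (by simp)
      simpa [hs] using this
    refine ⟨c', t', ?_, ?_, ?_, ?_, ?_, ?_, ?_⟩
    · intro j
      rw [hc'def]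
      dsimp only
      split_ifs with hj
      · exact hw _
      · exact le_refl 0
    · rw [hckey0, hwsum]
    · intro j
      rw [ht'def]
      exact ⟨(hsIoo _).1.le, (hsIoo _).2.le⟩
    · intro i j hij
      rw [ht'def]
      apply smono.monotone
      rw [Fin.mk_le_mk]
      rw [Fin.le_def] at hij
      omega
    · intro hev
      exact absurd ⟨k, hk⟩ (Nat.not_odd_iff_even.2 hev)
    · intro i
      have hdeg : (X ^ ((i:ℕ)+1) : Polynomial ℝ).natDegree ≤ 2 * n - 1 := by
        rw [natDegree_X_pow]
        omega
      have hpoly := hex _ hdeg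
      simp only [eval_pow, eval_X] at hpoly
      rw [hckey ((i:ℕ)+1), hpoly, hv i]
    · left
      refine ⟨Fin.last n, fun _ => by simp, dif_neg (by simp)⟩
  · -- even case
    have hevN : Even N := Nat.not_odd_iff_even.1 hoddN
    obtain ⟨r, hr⟩ := id hevN
    rw [if_neg hoddN] at hM
    set n : ℕ := r with hndef
    have hn1 : 1 ≤ n := by omega
    have hN2 : N = 2 * n := by omega
    have hMn : M = n + 2 := by omega
    subst hMn
    have t0 : t 0 = tmin := by
      rw [show (0 : Fin (n+2)) = ⟨0, hMpos⟩ from Fin.ext (by simp)]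
      exact hanchor hevN
    have tstrict : StrictMono t := by
      rw [Fin.strictMono_iff_lt_succ]
      intro i
      refine lt_of_le_of_ne (hmono ?_) (hred2 i.val (by omega))
      simp [Fin.le_def]
    have hcpos : ∀ j : Fin (n+2), (j:ℕ) ≠ 0 → 0 < c j := by
      intro j hj
      rcases (hc j).lt_or_eq with hlt | heq
      · exact hlt
      · exact absurd heq.symm (hred1 j (fun _ => hj))
    set u : Fin (n+1) → ℝ := fun i => t i.succ with hudef
    set d : Fin (n+1) → ℝ := fun i => c i.succ * (t i.succ - tmin) with hddef
    have hd : ∀ i, 0 < d i := by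
      intro i
      refine mul_pos (hcpos _ (by simp [Fin.val_succ])) ?_
      rw [sub_pos, ← t0]
      exact tstrict (Fin.succ_pos i)
    have uinj : Function.Injective u := tstrict.injective.comp (Fin.succ_injective _)
    obtain ⟨w, s, hw, smono, hsIoo, hex⟩ := gauss_quadrature_s11 n hn1 tmin tmax d u hd
      uinj (fun i => ht _) (fun f => hlem f.natDegree f rfl)
      (fun f hrt => no_sign_change f tmin tmax hrt (fun x y => hlem f.natDegree f rfl x y))
    have hstm : ∀ i, tmin < s i := fun i => (hsIoo i).1
    set e : Fin n → ℝ := fun i => w i / (s i - tmin) with hedef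
    have he : ∀ i, 0 ≤ e i := fun i =>
      div_nonneg (hw i) (sub_pos.2 (hstm i)).le
    have hwe : ∀ i, w i = e i * (s i - tmin) := by
      intro i
      have hne : s i - tmin ≠ 0 := sub_ne_zero.2 (hstm i).ne'
      simp only [hedef]
      exact (div_mul_cancel₀ _ hne).symm
    set W : ℝ := ∑ i, e i with hWdef
    have hcsum : ∑ i : Fin (n+1), c i.succ = 1 - c 0 := by
      have h1 := Fin.sum_univ_succ c
      rw [hs] at h1
      linarith
    -- key exactness identity
    have keylem : ∀ f : Polynomial ℝ, f.natDegree ≤ 2*n - 1 →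
        ∑ i, e i * ((s i - tmin) * f.eval (s i))
          = ∑ i : Fin (n+1), c i.succ * ((t i.succ - tmin) * f.eval (t i.succ)) := by
      intro f hf
      have hx := hex f hf
      calc ∑ i, e i * ((s i - tmin) * f.eval (s i))
          = ∑ i, w i * f.eval (s i) := by
            refine Finset.sum_congr rfl fun i _ => ?_
            rw [hwe i]; ring
        _ = ∑ i : Fin (n+1), d i * f.eval (u i) := hx
        _ = ∑ i : Fin (n+1), c i.succ * ((t i.succ - tmin) * f.eval (t i.succ)) := by
            refine Finset.sum_congr rfl fun i _ => ?_
            rw [hddef, hudef]; ring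
    -- moment transfer
    have momkey : ∀ dd : ℕ, 1 ≤ dd → dd ≤ N →
        ∑ i, e i * (s i ^ dd - tmin ^ dd)
          = ∑ i : Fin (n+1), c i.succ * (t i.succ ^ dd - tmin ^ dd) := by
      intro dd hd1 hd2
      set f : Polynomial ℝ := ∑ a ∈ Finset.range dd, X ^ a * C (tmin ^ (dd - 1 - a)) with hfdef
      have hfeval : ∀ x : ℝ, (x - tmin) * f.eval x = x ^ dd - tmin ^ dd := by
        intro x
        have hg := geom_sum₂_mul x tmin dd
        have hev : f.eval x = ∑ a ∈ Finset.range dd, x ^ a * tmin ^ (dd - 1 - a) := by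
          rw [hfdef]; simp [eval_finset_sum]
        rw [hev, mul_comm]
        exact hg
      have hfdeg : f.natDegree ≤ 2*n - 1 := by
        apply le_trans (natDegree_sum_le _ _)
        simp only [Finset.fold_max_le]
        refine ⟨Nat.zero_le _, fun a ha => ?_⟩
        refine le_trans natDegree_mul_le ?_
        rw [natDegree_X_pow, natDegree_C]
        have := Finset.mem_range.1 ha
        omega
      have hx := keylem f hfdeg
      calc ∑ i, e i * (s i ^ dd - tmin ^ dd)
          = ∑ i, e i * ((s i - tmin) * f.eval (s i)) := by
            refine Finset.sum_congr rfl fun i _ => ?_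
            rw [hfeval]
        _ = ∑ i : Fin (n+1), c i.succ * ((t i.succ - tmin) * f.eval (t i.succ)) := hx
        _ = ∑ i : Fin (n+1), c i.succ * (t i.succ ^ dd - tmin ^ dd) := by
            refine Finset.sum_congr rfl fun i _ => ?_
            rw [hfeval]
    -- nonnegativity of the anchor coefficient
    have hW1 : 0 ≤ 1 - W := by
      set Q0 : Polynomial ℝ := ∏ i : Fin n, (X - C (s i)) with hQ0def
      set R : Polynomial ℝ := Q0 ^ 2 with hRdef
      have hReval : ∀ x : ℝ, R.eval x = (∏ i, (x - s i))^2 := by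
        intro x
        rw [hRdef, eval_pow, hQ0def, eval_prod]
        simp
      have hRnn : ∀ x : ℝ, 0 ≤ R.eval x := fun x => by rw [hReval]; exact sq_nonneg _
      have hRt : 0 < R.eval tmin := by
        rw [hReval]
        have hne : (∏ i, (tmin - s i)) ≠ 0 :=
          Finset.prod_ne_zero_iff.2 fun i _ => sub_ne_zero.2 (hstm i).ne
        exact lt_of_le_of_ne (sq_nonneg _) (Ne.symm (pow_ne_zero 2 hne))
      have hRs : ∀ i, R.eval (s i) = 0 := by
        intro i
        rw [hReval]
        have : (∏ k, (s i - s k)) = 0 :=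
          Finset.prod_eq_zero (Finset.mem_univ i) (by ring)
        rw [this]
        ring
      obtain ⟨g, hg⟩ := X_sub_C_dvd_sub_C_eval (a := tmin) (p := R)
      have hgeval : ∀ x : ℝ, R.eval x - R.eval tmin = (x - tmin) * g.eval x := by
        intro x
        have := congrArg (eval x) hg
        simpa using this
      have hgdeg : g.natDegree ≤ 2*n - 1 := by
        by_cases hg0 : g = 0
        · simp [hg0]
        · have hQ0deg : Q0.natDegree = n := by
            rw [hQ0def, natDegree_prod _ _ (fun i _ => X_sub_C_ne_zero (s i))]
            simp [natDegree_X_sub_C]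
          have hRd : R.natDegree = 2*n := by
            rw [hRdef, natDegree_pow, hQ0deg]
          have hsub : (R - C (R.eval tmin)).natDegree ≤ 2*n := by
            refine le_trans (natDegree_sub_le _ _) ?_
            simp [hRd, natDegree_C]
          have hmul : (R - C (R.eval tmin)).natDegree = 1 + g.natDegree := by
            rw [hg, natDegree_mul (X_sub_C_ne_zero tmin) hg0, natDegree_X_sub_C]
          omega
      have hx := keylem g hgdeg
      have hLHS : ∑ i, e i * ((s i - tmin) * g.eval (s i)) = -R.eval tmin * W := by
        calc ∑ i, e i * ((s i - tmin) * g.eval (s i))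
            = ∑ i, e i * (-R.eval tmin) := by
              refine Finset.sum_congr rfl fun i _ => ?_
              rw [← hgeval, hRs]
              ring
          _ = -R.eval tmin * W := by
              rw [← Finset.sum_mul, ← hWdef]
              ring
      have hRHS : ∑ i : Fin (n+1), c i.succ * ((t i.succ - tmin) * g.eval (t i.succ))
          = (∑ i : Fin (n+1), c i.succ * R.eval (t i.succ)) - R.eval tmin * (1 - c 0) := by
        calc ∑ i : Fin (n+1), c i.succ * ((t i.succ - tmin) * g.eval (t i.succ))
            = ∑ i : Fin (n+1), (c i.succ * R.eval (t i.succ) - c i.succ * R.eval tmin) := by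
              refine Finset.sum_congr rfl fun i _ => ?_
              rw [← hgeval]
              ring
          _ = (∑ i : Fin (n+1), c i.succ * R.eval (t i.succ))
              - ∑ i : Fin (n+1), c i.succ * R.eval tmin := Finset.sum_sub_distrib _ _
          _ = (∑ i : Fin (n+1), c i.succ * R.eval (t i.succ)) - R.eval tmin * (1 - c 0) := by
              rw [← Finset.sum_mul, hcsum]
              ring
      have hprodnn : 0 ≤ ∑ i : Fin (n+1), c i.succ * R.eval (t i.succ) :=
        Finset.sum_nonneg fun i _ => mul_nonneg (hc _) (hRnn _)
      have hc0 : 0 ≤ c 0 := hc 0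
      have hkey : R.eval tmin * (1 - W)
          = R.eval tmin * c 0 + ∑ i : Fin (n+1), c i.succ * R.eval (t i.succ) := by
        linear_combination hLHS.symm.trans (hx.trans hRHS)
      nlinarith [hkey, hRt, hprodnn, hc0]
    -- the new representation
    set c' : Fin (n+2) → ℝ := fun j =>
      if (j:ℕ) = 0 then 1 - W else if hj : (j:ℕ) - 1 < n then e ⟨(j:ℕ) - 1, hj⟩ else 0
      with hc'def
    set t' : Fin (n+2) → ℝ := fun j =>
      if (j:ℕ) = 0 then tmin else s ⟨min ((j:ℕ) - 1) (n-1), by omega⟩ with ht'def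
    have hC0 : c' 0 = 1 - W := by simp [hc'def]
    have hT0 : t' 0 = tmin := by simp [ht'def]
    have hcsucc : ∀ i : Fin (n+1), c' i.succ = if hj : (i:ℕ) < n then e ⟨(i:ℕ), hj⟩ else 0 := by
      intro i
      simp [hc'def, Fin.val_succ]
    have htsucc : ∀ i : Fin (n+1), t' i.succ = s ⟨min (i:ℕ) (n-1), by omega⟩ := by
      intro i
      simp [ht'def, Fin.val_succ]
    have hinner : ∀ dd : ℕ,
        ∑ i : Fin (n+1), c' i.succ * t' i.succ ^ dd = ∑ i : Fin n, e i * s i ^ dd := by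
      intro dd
      rw [Fin.sum_univ_castSucc]
      have hlast : c' (Fin.last n).succ = 0 := by
        rw [hcsucc]
        exact dif_neg (by simp)
      rw [hlast, zero_mul, add_zero]
      refine Finset.sum_congr rfl fun i _ => ?_
      have h1 : c' (Fin.castSucc i).succ = e i := by
        rw [hcsucc]
        rw [dif_pos (by simpa using i.isLt : ((Fin.castSucc i : Fin (n+1)) : ℕ) < n)]
        exact congrArg e (Fin.ext (by simp))
      have h2 : t' (Fin.castSucc i).succ = s i := by
        rw [htsucc]
        congr 1
        apply Fin.ext
        have := i.isLt
        simp only [Fin.coe_castSucc]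
        omega
      rw [h1, h2]
    have hinner0 : ∑ i : Fin (n+1), c' i.succ = ∑ i : Fin n, e i := by
      have := hinner 0
      simpa using this
    refine ⟨c', t', ?_, ?_, ?_, ?_, ?_, ?_, ?_⟩
    · intro j
      simp only [hc'def]
      split_ifs with h1 h2
      · exact hW1
      · exact he _
      · exact le_refl 0
    · rw [Fin.sum_univ_succ, hC0, hinner0, ← hWdef]
      ring
    · intro j
      simp only [ht'def]
      split_ifs <;>
        first
          | exact ⟨le_rfl, h.le⟩
          | exact ⟨(hsIoo _).1.le, (hsIoo _).2.le⟩
    · intro i j hij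
      have hij' : (i:ℕ) ≤ (j:ℕ) := hij
      simp only [ht'def]
      by_cases h1 : (i:ℕ) = 0
      · rw [if_pos h1]
        by_cases h2 : (j:ℕ) = 0
        · rw [if_pos h2]
        · rw [if_neg h2]
          exact (hstm _).le
      · have h2 : (j:ℕ) ≠ 0 := by omega
        rw [if_neg h1, if_neg h2]
        apply smono.monotone
        rw [Fin.mk_le_mk]
        omega
    · intro _
      simp [ht'def]
    · intro i
      have h1 := momkey ((i:ℕ)+1) (by omega) (by omega)
      have h2 : c 0 * tmin ^ ((i:ℕ)+1)
          + ∑ k : Fin (n+1), c k.succ * t k.succ ^ ((i:ℕ)+1) = v i := by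
        have h2' := hv i
        rw [Fin.sum_univ_succ, t0] at h2'
        exact h2'
      have h3 : ∑ k : Fin n, e k * (s k ^ ((i:ℕ)+1) - tmin ^ ((i:ℕ)+1))
          = (∑ k : Fin n, e k * s k ^ ((i:ℕ)+1)) - W * tmin ^ ((i:ℕ)+1) := by
        calc ∑ k : Fin n, e k * (s k ^ ((i:ℕ)+1) - tmin ^ ((i:ℕ)+1))
            = ∑ k : Fin n, (e k * s k ^ ((i:ℕ)+1) - e k * tmin ^ ((i:ℕ)+1)) := by
              refine Finset.sum_congr rfl fun k _ => by ring
          _ = (∑ k : Fin n, e k * s k ^ ((i:ℕ)+1)) - ∑ k : Fin n, e k * tmin ^ ((i:ℕ)+1) :=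
              Finset.sum_sub_distrib _ _
          _ = (∑ k : Fin n, e k * s k ^ ((i:ℕ)+1)) - W * tmin ^ ((i:ℕ)+1) := by
              rw [← Finset.sum_mul, ← hWdef]
      have h4 : ∑ k : Fin (n+1), c k.succ * (t k.succ ^ ((i:ℕ)+1) - tmin ^ ((i:ℕ)+1))
          = (∑ k : Fin (n+1), c k.succ * t k.succ ^ ((i:ℕ)+1))
            - (1 - c 0) * tmin ^ ((i:ℕ)+1) := by
        calc ∑ k : Fin (n+1), c k.succ * (t k.succ ^ ((i:ℕ)+1) - tmin ^ ((i:ℕ)+1))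
            = ∑ k : Fin (n+1), (c k.succ * t k.succ ^ ((i:ℕ)+1)
                - c k.succ * tmin ^ ((i:ℕ)+1)) := by
              refine Finset.sum_congr rfl fun k _ => by ring
          _ = (∑ k : Fin (n+1), c k.succ * t k.succ ^ ((i:ℕ)+1))
              - ∑ k : Fin (n+1), c k.succ * tmin ^ ((i:ℕ)+1) := Finset.sum_sub_distrib _ _
          _ = (∑ k : Fin (n+1), c k.succ * t k.succ ^ ((i:ℕ)+1))
              - (1 - c 0) * tmin ^ ((i:ℕ)+1) := by
              rw [← Finset.sum_mul, hcsum]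
      rw [Fin.sum_univ_succ, hC0, hT0, hinner ((i:ℕ)+1)]
      linear_combination h1 - h3 + h4 + h2
    · left
      refine ⟨Fin.last (n+1), fun _ => by simp, ?_⟩
      simp [hc'def]
end
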